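/- arXiv:1509.09195 — 3 statements merged into one kernel-verified Lean document; each statement's English description precedes it below -/
import Mathlib

section
/- Let G be a square-free graph, let K be a clique in G (possibly empty), and let X1, X2, ..., Xk be pairwise disjoint subsets of V(G), each disjoint from K, such that Xi is complete to Xj for all i≠j; let X be the union of the Xi. Suppose that for every vertex v of K there is an index i such that v is complete to X∖Xi. Then there is an index i such that (K∪X)∖Xi is a clique in G. -/
open SimpleGraph

namespace Paper

variable {V : Type*} {α : Type*}

/-- `S` is complete to `T`: every vertex of `S` is adjacent to every vertex of `T`. -/
def CompleteTo (G : SimpleGraph V) (S T : Set V) : Prop :=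
  ∀ ⦃s⦄, s ∈ S → ∀ ⦃t⦄, t ∈ T → G.Adj s t

/-- `S` is anticomplete to `T`: there are no edges between `S` and `T`. -/
def AnticompleteTo (G : SimpleGraph V) (S T : Set V) : Prop :=
  ∀ ⦃s⦄, s ∈ S → ∀ ⦃t⦄, t ∈ T → ¬ G.Adj s t

/-- A vertex `v` is complete to a set `T`. -/
def VertexCompleteTo (G : SimpleGraph V) (v : V) (T : Set V) : Prop :=
  ∀ ⦃t⦄, t ∈ T → G.Adj v t

/-- `G` has a hole (induced cycle) of length `n`. -/
def HasHole (G : SimpleGraph V) (n : ℕ) : Prop :=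
  Nonempty (cycleGraph n ↪g G)

/-- `G` has no hole of odd length. -/
def NoOddHole (G : SimpleGraph V) : Prop :=
  ∀ n, 5 ≤ n → Odd n → ¬ HasHole G n

/-- `G` is Berge: no odd hole, no odd antihole. -/
def IsBerge (G : SimpleGraph V) : Prop :=
  NoOddHole G ∧ NoOddHole Gᶜ

/-- `G` is square-free: no induced 4-cycle. -/
def SquareFree (G : SimpleGraph V) : Prop := ¬ HasHole G 4

/-- The list `p` of vertices is a chordless (induced) path of `G`. -/
def IsChordlessPath (G : SimpleGraph V) (p : List V) : Prop :=
  p.Chain' G.Adj ∧ p.Nodup ∧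
    ∀ i j : Fin p.length, (i : ℕ) + 2 ≤ (j : ℕ) → ¬ G.Adj (p.get i) (p.get j)

/-- The interior vertices of a path given as a list. -/
def interior {β : Type*} (p : List β) : List β := p.tail.dropLast

/-- A triad: a set of three pairwise non-adjacent vertices. -/
def IsTriad (G : SimpleGraph V) (t : Set V) : Prop :=
  ∃ a b c : V, a ≠ b ∧ a ≠ c ∧ b ≠ c ∧
    ¬ G.Adj a b ∧ ¬ G.Adj a c ∧ ¬ G.Adj b c ∧ t = {a, b, c}

/-- The graph obtained from `G` by deleting all edges between `A` and `B`. -/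
def removeBetween (G : SimpleGraph V) (A B : Set V) : SimpleGraph V :=
  G.deleteEdges {e | ∃ x ∈ A, ∃ y ∈ B, e = s(x, y)}

/-- Condition (iii) of a good partition. -/
def Cond3 (G : SimpleGraph V) (K1 K3 L : Set V) : Prop :=
  ∀ (p : List V) (x y : V), IsChordlessPath (removeBetween G K1 K3) p →
    p.head? = some x → p.getLast? = some y → x ∈ K1 → y ∈ K3 →
    (∀ v ∈ interior p, v ∈ L) →
    ∃ v ∈ p, v ∈ L ∧ VertexCompleteTo G v K1

/-- A good partition of `G`. -/
structure IsGoodPartition (G : SimpleGraph V) (K1 K2 K3 L R : Set V) : Prop where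
  cover : K1 ∪ K2 ∪ K3 ∪ L ∪ R = Set.univ
  pdisj : ∀ i j : Fin 5, i ≠ j → Disjoint (![K1, K2, K3, L, R] i) (![K1, K2, K3, L, R] j)
  Lne : L.Nonempty
  Rne : R.Nonempty
  LR_anti : AnticompleteTo G L R
  clique12 : G.IsClique (K1 ∪ K2)
  clique23 : G.IsClique (K2 ∪ K3)
  cond3 : Cond3 G K1 K3 L
  cond4 : AnticompleteTo G K1 K3 ∨
      ∀ v ∈ L, ¬ ((∃ k ∈ K1, G.Adj v k) ∧ (∃ k ∈ K3, G.Adj v k))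
  cond5 : ∃ x ∈ L, ∃ y ∈ R, ∃ t : Set V, IsTriad G t ∧ x ∈ t ∧ y ∈ t

def HasGoodPartition (G : SimpleGraph V) : Prop :=
  ∃ K1 K2 K3 L R : Set V, IsGoodPartition G K1 K2 K3 L R

/-- An induced prism in `G`, with triangle vertices `a i`, `b i` joined by
the chordless paths `P i`. -/
structure IsPrism (G : SimpleGraph V) (a b : Fin 3 → V) (P : Fin 3 → List V) : Prop where
  chordless : ∀ i, IsChordlessPath G (P i)
  two_le : ∀ i, 2 ≤ (P i).length
  head : ∀ i, (P i).head? = some (a i)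
  last : ∀ i, (P i).getLast? = some (b i)
  disj : ∀ i j, i ≠ j → ∀ u ∈ P i, u ∉ P j
  edge_iff : ∀ i j, i ≠ j → ∀ u ∈ P i, ∀ v ∈ P j,
    (G.Adj u v ↔ (u = a i ∧ v = a j) ∨ (u = b i ∧ v = b j))

def ContainsPrism (G : SimpleGraph V) : Prop :=
  ∃ a b P, IsPrism G a b P

def ContainsEvenPrism (G : SimpleGraph V) : Prop :=
  ∃ a b P, IsPrism G a b P ∧ ∀ i : Fin 3, Even ((P i).length - 1)

def ContainsOddPrism (G : SimpleGraph V) : Prop :=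
  ∃ a b P, IsPrism G a b P ∧ ∀ i : Fin 3, Odd ((P i).length - 1)

/-- A rung: a chordless path from `A` to `B` with interior in `C`. -/
def IsRung (G : SimpleGraph V) (A B C : Set V) (p : List V) : Prop :=
  IsChordlessPath G p ∧
    (∃ x, p.head? = some x ∧ x ∈ A) ∧
    (∃ y, p.getLast? = some y ∧ y ∈ B) ∧
    ∀ v ∈ interior p, v ∈ C

/-- A hyperprism induced in `G`, with nine (pairwise disjoint) pieces `A i`, `C i`, `B i`. -/
structure IsHyperprism (G : SimpleGraph V) (A C B : Fin 3 → Set V) : Prop where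
  A_ne : ∀ i, (A i).Nonempty
  B_ne : ∀ i, (B i).Nonempty
  pdisj : ∀ p q : Fin 3 × Fin 3, p ≠ q →
    Disjoint (![A, C, B] p.1 p.2) (![A, C, B] q.1 q.2)
  cross : ∀ i j, i ≠ j → ∀ u ∈ A i ∪ C i ∪ B i, ∀ v ∈ A j ∪ C j ∪ B j,
    (G.Adj u v ↔ (u ∈ A i ∧ v ∈ A j) ∨ (u ∈ B i ∧ v ∈ B j))
  rung_cover : ∀ i, ∀ v ∈ A i ∪ C i ∪ B i,
    ∃ p, IsRung G (A i) (B i) (C i) p ∧ v ∈ p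

/-- The vertex set of a hyperprism. -/
def hypVerts (A C B : Fin 3 → Set V) : Set V := ⋃ i, (A i ∪ C i ∪ B i)

def EvenHyperprism (G : SimpleGraph V) (A C B : Fin 3 → Set V) : Prop :=
  ∀ i p, IsRung G (A i) (B i) (C i) p → Even (p.length - 1)

def OddHyperprism (G : SimpleGraph V) (A C B : Fin 3 → Set V) : Prop :=
  ∀ i p, IsRung G (A i) (B i) (C i) p → Odd (p.length - 1)

/-- A major neighbor of a hyperprism. -/
def IsMajorNbrHyp (G : SimpleGraph V) (A C B : Fin 3 → Set V) (x : V) : Prop :=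
  x ∉ hypVerts A C B ∧
  ∃ (p : Fin 3 → List V) (a b : Fin 3 → V),
    (∀ i, IsRung G (A i) (B i) (C i) (p i) ∧
      (p i).head? = some (a i) ∧ (p i).getLast? = some (b i)) ∧
    (∃ i j, i ≠ j ∧ G.Adj x (a i) ∧ G.Adj x (a j)) ∧
    (∃ i j, i ≠ j ∧ G.Adj x (b i) ∧ G.Adj x (b j))

/-- A local subset of a hyperprism. -/
def HypLocal (A C B : Fin 3 → Set V) (X : Set V) : Prop :=
  (X ⊆ ⋃ i, A i) ∨ (X ⊆ ⋃ i, B i) ∨ ∃ i, X ⊆ A i ∪ C i ∪ B i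

/-- `x` and `y` are consecutive (in this order) in the list `l`. -/
def consecutive {β : Type*} (l : List β) (x y : β) : Prop :=
  ∃ i : ℕ, l[i]? = some x ∧ l[i + 1]? = some y

/-- `H` is a subdivision of `J`, witnessed by the injection `g` of branch vertices and,
for each edge `uv` of `J`, the path `P u v` of `H` replacing that edge. -/
structure IsSubdivisionVia {α' β : Type*} (J : SimpleGraph α') (H : SimpleGraph β)
    (g : α' ↪ β) (P : α' → α' → List β) : Prop where
  chain : ∀ u v, J.Adj u v → (P u v).Chain' H.Adj
  nodup : ∀ u v, J.Adj u v → (P u v).Nodup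
  rev : ∀ u v, J.Adj u v → P v u = (P u v).reverse
  head : ∀ u v, J.Adj u v → (P u v).head? = some (g u)
  last : ∀ u v, J.Adj u v → (P u v).getLast? = some (g v)
  branch : ∀ u v, J.Adj u v → ∀ w : α', g w ∈ P u v → w = u ∨ w = v
  int_disj : ∀ u v w x, J.Adj u v → J.Adj w x → s(u, v) ≠ s(w, x) →
    ∀ z ∈ interior (P u v), z ∉ P w x
  cover : ∀ z : β, (∃ w, g w = z) ∨ ∃ u v, J.Adj u v ∧ z ∈ interior (P u v)
  edge_iff : ∀ a b : β, H.Adj a b ↔ ∃ u v, J.Adj u v ∧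
    (consecutive (P u v) a b ∨ consecutive (P u v) b a)

def IsSubdivision {α' β : Type*} (J : SimpleGraph α') (H : SimpleGraph β) : Prop :=
  ∃ (g : α' ↪ β) (P : α' → α' → List β), IsSubdivisionVia J H g P

/-- The complete graph `K₄`. -/
def K4g : SimpleGraph (Fin 4) := completeGraph (Fin 4)

/-- `G` contains (as an induced subgraph) the line graph of a bipartite subdivision of `J`. -/
def ContainsLineGraphOfBipSubdiv {α' : Type*} (J : SimpleGraph α') (G : SimpleGraph V) : Prop :=
  ∃ (β : Type) (H : SimpleGraph β), IsSubdivision J H ∧ H.Colorable 2 ∧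
    Nonempty (H.lineGraph ↪g G)

/-- The set `W` induces in `G` the line graph of a bipartite subdivision of `J`. -/
def InducesLineGraphOfBipSubdiv {α' : Type*} (J : SimpleGraph α') (G : SimpleGraph V)
    (W : Set V) : Prop :=
  ∃ (β : Type) (H : SimpleGraph β), IsSubdivision J H ∧ H.Colorable 2 ∧
    Nonempty (H.lineGraph ≃g G.induce W)

/-- A (finite) graph is 3-connected. -/
def ThreeConnected {α' : Type*} [Fintype α'] (J : SimpleGraph α') : Prop :=
  4 ≤ Fintype.card α' ∧ ∀ s : Set α', Nat.card s ≤ 2 → (J.induce sᶜ).Connected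

/-- `J'` is an enlargement of `J`. -/
def IsEnlargement {α' α'' : Type*} [Fintype α''] (J : SimpleGraph α')
    (J' : SimpleGraph α'') : Prop :=
  ThreeConnected J' ∧ ∃ s : Set α'', s ≠ Set.univ ∧
    ∃ (β : Type) (H : SimpleGraph β), IsSubdivision J H ∧ Nonempty (H ≃g J'.induce s)

/-- The appearance of `J` given by the subdivision data `(H, g)` is degenerate. -/
def IsDegenerateVia {α' β : Type*} (J : SimpleGraph α') (H : SimpleGraph β)
    (g : α' ↪ β) : Prop :=
  (Nonempty (J ≃g completeGraph (Fin 4)) ∧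
    ∃ a b c d : α', [a, b, c, d].Nodup ∧
      H.Adj (g a) (g b) ∧ H.Adj (g b) (g c) ∧ H.Adj (g c) (g d) ∧ H.Adj (g d) (g a)) ∨
  (Nonempty (J ≃g completeBipartiteGraph (Fin 3) (Fin 3)) ∧ Nonempty (H ≃g J))

/-- `J` has a non-degenerate appearance in `G`. -/
def HasNondegenerateAppearance {α' : Type*} (J : SimpleGraph α') (G : SimpleGraph V) : Prop :=
  ∃ (β : Type) (H : SimpleGraph β) (g : α' ↪ β) (P : α' → α' → List β),
    IsSubdivisionVia J H g P ∧ H.Colorable 2 ∧ ¬ IsDegenerateVia J H g ∧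
    Nonempty (H.lineGraph ↪g G)

/-- A `uv`-rung of a strip system. -/
def IsStripRung (G : SimpleGraph V) (S : α → α → Set V) (N : α → Set V)
    (u v : α) (p : List V) : Prop :=
  IsChordlessPath G p ∧ (∀ z ∈ p, z ∈ S u v) ∧
    (∃ a, p.head? = some a ∧ a ∈ N u ∧ ∀ z ∈ p, z ∈ N u → z = a) ∧
    (∃ b, p.getLast? = some b ∧ b ∈ N v ∧ ∀ z ∈ p, z ∈ N v → z = b)

/-- The vertex set `V(S,N)` of a strip system. -/
def stripVerts (J : SimpleGraph α) (S : α → α → Set V) : Set V :=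
  {z | ∃ u v, J.Adj u v ∧ z ∈ S u v}

/-- A `J`-strip system `(S,N)` in `G`. -/
structure IsStripSystem {α' : Type*} (J : SimpleGraph α') (G : SimpleGraph V)
    (S : α' → α' → Set V) (N : α' → Set V) : Prop where
  S_symm : ∀ u v, S u v = S v u
  S_empty : ∀ u v, ¬ J.Adj u v → S u v = ∅
  S_disj : ∀ u v w x, J.Adj u v → J.Adj w x → s(u, v) ≠ s(w, x) →
    Disjoint (S u v) (S w x)
  N_sub : ∀ u, N u ⊆ {z | ∃ v, J.Adj u v ∧ z ∈ S u v}
  rung_cover : ∀ u v, J.Adj u v → ∀ z ∈ S u v,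
    ∃ p, IsStripRung G S N u v p ∧ z ∈ p
  far_anti : ∀ u v w x, J.Adj u v → J.Adj w x → u ≠ w → u ≠ x → v ≠ w → v ≠ x →
    AnticompleteTo G (S u v) (S w x)
  fork : ∀ u v w, J.Adj u v → J.Adj u w → v ≠ w →
    ∀ a ∈ S u v, ∀ b ∈ S u w, (G.Adj a b ↔ a ∈ N u ∧ b ∈ N u)
  parity : ∃ R : Sym2 α' → List V,
    (∀ u v, J.Adj u v →
      IsStripRung G S N u v (R s(u, v)) ∨ IsStripRung G S N v u (R s(u, v))) ∧
    ∀ (u : α') (c : J.Walk u u), c.IsCycle →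
      ((c.edges.map fun e => (R e).length - 1).sum % 2 = c.length % 2)

/-- `X` saturates, where `Nuv u v` plays the role of `N_uv`. -/
def SaturatesOn (J : SimpleGraph α) (Nuv : α → α → Set V) (X : Set V) : Prop :=
  ∀ u v w, J.Adj u v → J.Adj u w → ¬ (Nuv u v ⊆ X) → ¬ (Nuv u w ⊆ X) → v = w

/-- `x` is major with respect to the strip system `(S,N)`. -/
def IsMajorStrip (J : SimpleGraph α) (G : SimpleGraph V)
    (S : α → α → Set V) (N : α → Set V) (x : V) : Prop :=
  x ∉ stripVerts J S ∧ SaturatesOn J (fun u v => S u v ∩ N u) (G.neighborSet x)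

/-- `R` is a choice of rungs of the strip system `(S,N)`. -/
def IsChoiceOfRungs (J : SimpleGraph α) (G : SimpleGraph V)
    (S : α → α → Set V) (N : α → Set V) (R : Sym2 α → List V) : Prop :=
  ∀ u v, J.Adj u v →
    IsStripRung G S N u v (R s(u, v)) ∨ IsStripRung G S N v u (R s(u, v))

/-- `x` is major with respect to the choice of rungs `R`. -/
def IsMajorOnChoice (J : SimpleGraph α) (G : SimpleGraph V)
    (S : α → α → Set V) (N : α → Set V) (R : Sym2 α → List V) (x : V) : Prop :=
  x ∉ stripVerts J S ∧
  SaturatesOn J (fun u v => {z | z ∈ R s(u, v)} ∩ N u) (G.neighborSet x)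

/-- A local subset of a strip system. -/
def StripLocal (J : SimpleGraph α) (S : α → α → Set V) (N : α → Set V)
    (X : Set V) : Prop :=
  (∃ u, X ⊆ N u) ∨ ∃ u v, J.Adj u v ∧ X ⊆ S u v

/-- Some choice of rungs of the `K₄`-strip system yields a degenerate appearance of `K₄`
(the four branch vertices form a square, i.e. some 4-cycle of rungs are all single vertices). -/
def ChoiceYieldsDegenerateK4 (J : SimpleGraph α) (G : SimpleGraph V)
    (S : α → α → Set V) (N : α → Set V) : Prop :=
  ∃ R, IsChoiceOfRungs J G S N R ∧ ∃ a b c d : α, [a, b, c, d].Nodup ∧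
    J.Adj a b ∧ J.Adj b c ∧ J.Adj c d ∧ J.Adj d a ∧
    (R s(a, b)).length = 1 ∧ (R s(b, c)).length = 1 ∧
    (R s(c, d)).length = 1 ∧ (R s(d, a)).length = 1

/-- The set `O_ij` for a `K₄`-strip system. -/
def OsetK4 (G : SimpleGraph V) (S : Fin 4 → Fin 4 → Set V) (N : Fin 4 → Set V)
    (i j : Fin 4) : Set V :=
  {x | x ∉ stripVerts K4g S ∧
    (∀ y ∈ (N i ∪ N j) \ S i j, G.Adj x y) ∧
    (∀ y ∈ stripVerts K4g S \ (N i ∪ N j ∪ S i j), ¬ G.Adj x y)}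

/-- A special `K₄`-strip system (vertices of `K₄` are `0,1,2,3`, standing for `1,2,3,4`). -/
structure IsSpecialK4StripSystem (G : SimpleGraph V)
    (S : Fin 4 → Fin 4 → Set V) (N : Fin 4 → Set V) : Prop where
  strip : IsStripSystem K4g G S N
  a13 : S 0 2 ⊆ N 0 ∧ S 0 2 ⊆ N 2
  a24 : S 1 3 ⊆ N 1 ∧ S 1 3 ⊆ N 3
  b12 : ∀ p, IsStripRung G S N 0 1 p → Even (p.length - 1) ∧ 3 ≤ p.length
  b34 : ∀ p, IsStripRung G S N 2 3 p → Even (p.length - 1) ∧ 3 ≤ p.length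
  b14 : ∀ p, IsStripRung G S N 0 3 p → Odd (p.length - 1) ∧ 4 ≤ p.length
  b23 : ∀ p, IsStripRung G S N 1 2 p → Odd (p.length - 1) ∧ 4 ≤ p.length
  c_ne12 : (OsetK4 G S N 0 1).Nonempty
  c_ne34 : (OsetK4 G S N 2 3).Nonempty
  c_comp : CompleteTo G (OsetK4 G S N 0 1) (OsetK4 G S N 2 3)
  majors : ∀ x ∉ stripVerts K4g S ∪ OsetK4 G S N 0 1 ∪ OsetK4 G S N 2 3,
      (∃ R, IsChoiceOfRungs K4g G S N R ∧ IsMajorOnChoice K4g G S N R x) →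
      IsMajorStrip K4g G S N x
  e_app : ¬ ∃ (α'' : Type) (_ : Fintype α'') (J' : SimpleGraph α'') (W : Set V),
      IsEnlargement K4g J' ∧ stripVerts K4g S ⊆ W ∧
      Disjoint W (OsetK4 G S N 0 1 ∪ OsetK4 G S N 2 3) ∧
      InducesLineGraphOfBipSubdiv J' G W
  e_max : ¬ ∃ (S' : Fin 4 → Fin 4 → Set V) (N' : Fin 4 → Set V),
      IsStripSystem K4g G S' N' ∧
      Disjoint (stripVerts K4g S') (OsetK4 G S N 0 1 ∪ OsetK4 G S N 2 3) ∧
      stripVerts K4g S ⊂ stripVerts K4g S'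

/-- An almost good partition: conditions (i), (ii) and (v) of a good partition. -/
structure IsAlmostGoodPartition (G : SimpleGraph V) (K1 K2 K3 L R : Set V) : Prop where
  cover : K1 ∪ K2 ∪ K3 ∪ L ∪ R = Set.univ
  pdisj : ∀ i j : Fin 5, i ≠ j → Disjoint (![K1, K2, K3, L, R] i) (![K1, K2, K3, L, R] j)
  Lne : L.Nonempty
  Rne : R.Nonempty
  LR_anti : AnticompleteTo G L R
  clique12 : G.IsClique (K1 ∪ K2)
  clique23 : G.IsClique (K2 ∪ K3)
  cond5 : ∃ x ∈ L, ∃ y ∈ R, ∃ t : Set V, IsTriad G t ∧ x ∈ t ∧ y ∈ t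

/-- An optimal good partition. -/
def IsOptimalGoodPartition (G : SimpleGraph V) (K1 K2 K3 L R : Set V) : Prop :=
  IsGoodPartition G K1 K2 K3 L R ∧
    ¬ ∃ K1' K2' K3' L' R' : Set V, IsGoodPartition G K1' K2' K3' L' R' ∧
      (K2 ⊂ K2' ∨ (K2 = K2' ∧ K3 ⊂ K3'))

/-- `c` is a maximal vertex of `K`: its neighborhood in `other` contains that of
every other vertex of `K`. -/
def IsMaxVert (G : SimpleGraph V) (other K : Set V) (c : V) : Prop :=
  c ∈ K ∧ ∀ d ∈ K, ∀ z ∈ other, G.Adj d z → G.Adj c z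

/-- A frame in `G`. -/
structure IsFrame (G : SimpleGraph V) (Q1 Q3 : Set V) (x y : V) (C1 C3 : Set V) : Prop where
  xy_ne : x ≠ y
  xy_triad : ∃ t : Set V, IsTriad G t ∧ x ∈ t ∧ y ∈ t
  Q1_cl : G.IsClique Q1
  Q1_x : x ∉ Q1
  Q1_y : y ∉ Q1
  Q1_max : ∀ Q : Set V, G.IsClique Q → x ∉ Q → y ∉ Q → Q1 ⊆ Q → Q = Q1
  Q3_cl : G.IsClique Q3
  Q3_x : x ∉ Q3
  Q3_y : y ∉ Q3
  Q3_max : ∀ Q : Set V, G.IsClique Q → x ∉ Q → y ∉ Q → Q3 ⊆ Q → Q = Q3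
  C1_sub : C1 ⊆ Q1 \ Q3
  C3_sub : C3 ⊆ Q3 \ Q1
  C1_small : C1.Subsingleton
  C3_small : C3.Subsingleton

/-- A frame for a good partition. -/
structure IsFrameFor (G : SimpleGraph V) (Q1 Q3 : Set V) (x y : V) (C1 C3 : Set V)
    (K1 K2 K3 L R : Set V) : Prop where
  frame : IsFrame G Q1 Q3 x y C1 C3
  K1_sub : K1 ⊆ Q1 \ Q3
  K2_eq : K2 = Q1 ∩ Q3
  K3_sub : K3 ⊆ Q3 \ Q1
  xL : x ∈ L
  yR : y ∈ R
  C1_spec : (K1 = ∅ → C1 = ∅) ∧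
    (K1 ≠ ∅ → ∃ c1, C1 = {c1} ∧ IsMaxVert G (Q3 \ Q1) K1 c1)
  C3_spec : (K3 = ∅ → C3 = ∅) ∧
    (K3 ≠ ∅ → ∃ c3, C3 = {c3} ∧ IsMaxVert G (Q1 \ Q3) K3 c3)



lemma square_of_cycle {V : Type*} {G : SimpleGraph V} {a b c d : V}
    (hab : G.Adj a b) (hbc : G.Adj b c) (hcd : G.Adj c d) (hda : G.Adj d a)
    (hac : ¬ G.Adj a c) (hbd : ¬ G.Adj b d) (hac' : a ≠ c) (hbd' : b ≠ d) :
    HasHole G 4 := by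
  refine ⟨⟨⟨![a,b,c,d], ?_⟩, ?_⟩⟩
  · intro i j hij
    fin_cases i <;> fin_cases j <;> simp_all
  · intro i j
    fin_cases i <;> fin_cases j <;>
      simp [cycleGraph_adj] <;> first
        | exact fun h => (G.loopless _ h).elim
        | exact hab | exact hbc | exact hcd | exact hda
        | exact hab.symm | exact hbc.symm | exact hcd.symm | exact hda.symm
        | exact hac | exact hbd
        | exact fun h => hac h.symm
        | exact fun h => hbd h.symm
        | exact iff_of_false hac (by decide)
        | exact iff_of_false hbd (by decide)
        | exact iff_of_false (fun h => hac h.symm) (by decide)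
        | exact iff_of_false (fun h => hbd h.symm) (by decide)
        | exact iff_of_true hda.symm (by decide)
        | exact iff_of_true hda (by decide)

/-- the clique lemma for square-free graphs. -/
theorem squareFree_clique_lemma
    {V : Type*} (G : SimpleGraph V) (hsf : SquareFree G)
    (K : Set V) (hK : G.IsClique K)
    (k : ℕ) (hk : 0 < k) (X : Fin k → Set V)
    (hXdisj : ∀ i j, i ≠ j → Disjoint (X i) (X j))
    (hXK : ∀ i, Disjoint (X i) K)
    (hXcomp : ∀ i j, i ≠ j → CompleteTo G (X i) (X j))
    (hvK : ∀ v ∈ K, ∃ i, VertexCompleteTo G v ((⋃ j, X j) \ X i)) :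
    ∃ i, G.IsClique ((K ∪ ⋃ j, X j) \ X i) := by
  classical
  set XU := ⋃ j, X j with hXU
  have memU : ∀ {j} {x}, x ∈ X j → x ∈ XU := fun {j} {x} hx => Set.mem_iUnion.2 ⟨j, hx⟩
  -- a vertex of K with a non-neighbor in X j is complete to XU \ X j
  have forced : ∀ v ∈ K, ∀ j, ∀ x ∈ X j, ¬ G.Adj v x →
      VertexCompleteTo G v (XU \ X j) := by
    intro v hv j x hx hnadj
    obtain ⟨i, hi⟩ := hvK v hv
    have hij : i = j := by
      by_contra hij
      exact hnadj (hi ⟨memU hx, fun h => (Set.disjoint_left.1 (hXdisj j i fun e => hij e.symm) hx) h⟩)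
    subst hij
    exact hi
  have sub : ∀ {j j'} {x}, j ≠ j' → x ∈ X j → x ∈ XU \ X j' := by
    intro j j' x hne hx
    exact ⟨memU hx, fun h => Set.disjoint_left.1 (hXdisj j j' hne) hx h⟩
  let Bad : Fin k → Prop := fun j =>
    (∃ u ∈ X j, ∃ w ∈ X j, u ≠ w ∧ ¬ G.Adj u w) ∨ (∃ v ∈ K, ∃ x ∈ X j, ¬ G.Adj v x)
  have uniq : ∀ j j', Bad j → Bad j' → j = j' := by
    intro j j' hj hj'
    by_contra hne
    have hne' : j' ≠ j := fun e => hne e.symm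
    -- helper for the mixed case
    have mixed : ∀ l l', l ≠ l' →
        (∃ u ∈ X l, ∃ w ∈ X l, u ≠ w ∧ ¬ G.Adj u w) →
        (∃ v ∈ K, ∃ x ∈ X l', ¬ G.Adj v x) → False := by
      intro l l' hll ⟨u, hu, w, hw, huw, hnuw⟩ ⟨v, hv, x, hx, hnvx⟩
      have hvc := forced v hv l' x hx hnvx
      have hvu : G.Adj v u := hvc (sub hll hu)
      have hvw : G.Adj v w := hvc (sub hll hw)
      have hwx : G.Adj w x := hXcomp l l' hll hw hx
      have hxu : G.Adj x u := (hXcomp l l' hll hu hx).symm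
      exact hsf (square_of_cycle hvu.symm hvw hwx hxu hnuw hnvx huw
        (fun e => Set.disjoint_left.1 (hXK l') hx (e ▸ hv)))
    rcases hj with ⟨u, hu, w, hw, huw, hnuw⟩ | hKj
    · rcases hj' with ⟨u', hu', w', hw', huw', hnuw'⟩ | hKj'
      · have h1 : G.Adj u u' := hXcomp j j' hne hu hu'
        have h2 : G.Adj u' w := (hXcomp j j' hne hw hu').symm
        have h3 : G.Adj w w' := hXcomp j j' hne hw hw'
        have h4 : G.Adj w' u := (hXcomp j j' hne hu hw').symm
        exact hsf (square_of_cycle h1 h2 h3 h4 hnuw hnuw' huw huw')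
      · exact mixed j j' hne ⟨u, hu, w, hw, huw, hnuw⟩ hKj'
    · rcases hj' with ⟨u', hu', w', hw', huw', hnuw'⟩ | hKj'
      · exact mixed j' j hne' ⟨u', hu', w', hw', huw', hnuw'⟩ hKj
      · obtain ⟨v, hv, x, hx, hnvx⟩ := hKj
        obtain ⟨v', hv', x', hx', hnvx'⟩ := hKj'
        have hvv' : v ≠ v' := by
          rintro rfl
          exact hnvx' (forced v hv j x hx hnvx (sub hne' hx'))
        have h1 : G.Adj v v' := hK hv hv' hvv'
        have h2 : G.Adj v' x := forced v' hv' j' x' hx' hnvx' (sub hne hx)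
        have h3 : G.Adj x x' := hXcomp j j' hne hx hx'
        have h4 : G.Adj x' v := (forced v hv j x hx hnvx (sub hne' hx')).symm
        exact hsf (square_of_cycle h1 h2 h3 h4 hnvx hnvx'
          (fun e => Set.disjoint_left.1 (hXK j) hx (e ▸ hv))
          (fun e => Set.disjoint_left.1 (hXK j') hx' (e ▸ hv')))
  obtain ⟨i, hkey⟩ : ∃ i : Fin k, ∀ j, Bad j → j = i := by
    by_cases hbad : ∃ j, Bad j
    · obtain ⟨i, hi⟩ := hbad
      exact ⟨i, fun j hj => uniq j i hj hi⟩
    · exact ⟨⟨0, hk⟩, fun j hj => absurd ⟨j, hj⟩ hbad⟩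
  refine ⟨i, ?_⟩
  intro a ha b hb hne
  obtain ⟨haU, hai⟩ := ha
  obtain ⟨hbU, hbi⟩ := hb
  rcases haU with haK | haX
  · rcases hbU with hbK | hbX
    · exact hK haK hbK hne
    · obtain ⟨j, hbj⟩ := Set.mem_iUnion.1 hbX
      by_contra hnadj
      exact hbi ((hkey j (Or.inr ⟨a, haK, b, hbj, hnadj⟩)) ▸ hbj)
  · obtain ⟨j, haj⟩ := Set.mem_iUnion.1 haX
    rcases hbU with hbK | hbX
    · by_contra hnadj
      exact hai ((hkey j (Or.inr ⟨b, hbK, a, haj, fun h => hnadj h.symm⟩)) ▸ haj)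
    · obtain ⟨l, hbl⟩ := Set.mem_iUnion.1 hbX
      by_cases hjl : j = l
      · subst hjl
        by_contra hnadj
        exact hai ((hkey j (Or.inl ⟨a, haj, b, hbl, hne, hnadj⟩)) ▸ haj)
      · exact hXcomp j l hjl haj hbl

end Paper
end

section
/- Let G be a square-free Berge graph and (S,N) a special K4-strip system in G with V(K4)={1,2,3,4}. Let M be the set of vertices major with respect to (S,N). Then: (1) O_12∪M and O_34∪M are cliques of G; and (2) there exists a neighbor k of 1 in K4 such that O_12∪M∪(N_1∖N_1k) is a clique, and there exists a neighbor ℓ of 2 in K4 such that O_12∪M∪(N_2∖N_2ℓ) is a clique. -/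
open SimpleGraph

namespace Paper

variable {V : Type*} {α : Type*}

section StripAux

set_option maxHeartbeats 1000000

variable {V : Type*} {G : SimpleGraph V} {S : Fin 4 → Fin 4 → Set V} {N : Fin 4 → Set V}

lemma square {G : SimpleGraph V} (hsf : SquareFree G) {z z' p q : V}
    (hne : z ≠ z') (hnadj : ¬ G.Adj z z') (hpq : p ≠ q) (hpqn : ¬ G.Adj p q)
    (hzp : G.Adj z p) (hzq : G.Adj z q) (hz'p : G.Adj z' p) (hz'q : G.Adj z' q) : False := by
  apply hsf
  have hzp' : z ≠ p := hzp.ne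
  have hzq' : z ≠ q := hzq.ne
  have hz'p' : z' ≠ p := hz'p.ne
  have hz'q' : z' ≠ q := hz'q.ne
  refine ⟨⟨⟨![z, p, z', q], ?_⟩, ?_⟩⟩
  · intro a b hab
    fin_cases a <;> fin_cases b <;> simp_all
  · intro a b
    fin_cases a <;> fin_cases b <;>
      simp only [Matrix.cons_val_zero, Matrix.cons_val_one, Matrix.head_cons,
        Matrix.cons_val_two, Matrix.tail_cons, Matrix.cons_val_three, Fin.isValue] <;>
      first
        | exact iff_of_false (G.irrefl) (by decide)
        | exact iff_of_true hzp (by decide)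
        | exact iff_of_true hzq (by decide)
        | exact iff_of_true hz'p (by decide)
        | exact iff_of_true hz'q (by decide)
        | exact iff_of_true hzp.symm (by decide)
        | exact iff_of_true hzq.symm (by decide)
        | exact iff_of_true hz'p.symm (by decide)
        | exact iff_of_true hz'q.symm (by decide)
        | exact iff_of_false hnadj (by decide)
        | exact iff_of_false (fun h => hnadj h.symm) (by decide)
        | exact iff_of_false hpqn (by decide)
        | exact iff_of_false (fun h => hpqn h.symm) (by decide)

lemma head_ne_getLast {l : List V} (hnd : l.Nodup) (hlen : 2 ≤ l.length)
    {a b : V} (ha : l.head? = some a) (hb : l.getLast? = some b) : a ≠ b := by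
  match l, hnd, hlen with
  | x :: y :: xs, hnd, _ =>
    have ha' : a = x := by
      have := ha; simp only [List.head?] at this; exact (Option.some.inj this).symm
    have hb' : b ∈ y :: xs := by
      have hbl : (x :: y :: xs).getLast (by simp) = b := by
        have h2 := List.getLast?_eq_getLast (l := x :: y :: xs) (by simp)
        rw [h2] at hb; exact (Option.some.inj hb)
      have hmem : (x :: y :: xs).getLast (by simp) ∈ y :: xs := by
        rw [List.getLast_cons (by simp)]
        exact List.getLast_mem _
      rwa [hbl] at hmem
    intro hab
    subst hab; subst ha'
    exact (List.nodup_cons.mp hnd).1 hb'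

lemma k4_adj {u v : Fin 4} (h : u ≠ v) : K4g.Adj u v := h

lemma memS (hst : IsStripSystem K4g G S N) {u v : Fin 4} {p : V} (h : p ∈ S u v) :
    p ∈ S v u := by rw [hst.S_symm v u]; exact h

lemma fork_adj (hst : IsStripSystem K4g G S N) (t r r' : Fin 4) (hrr' : r ≠ r')
    (htr : t ≠ r) (htr' : t ≠ r') {p q : V} (hp : p ∈ S t r) (hq : q ∈ S t r')
    (h1 : p ∈ N t) (h2 : q ∈ N t) : G.Adj p q :=
  (hst.fork t r r' (k4_adj htr) (k4_adj htr') hrr' p hp q hq).mpr ⟨h1, h2⟩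

lemma fork_not (hst : IsStripSystem K4g G S N) (t r r' : Fin 4) (hrr' : r ≠ r')
    (htr : t ≠ r) (htr' : t ≠ r') {p q : V} (hp : p ∈ S t r) (hq : q ∈ S t r')
    (h : p ∉ N t ∨ q ∉ N t) : ¬ G.Adj p q := fun hadj => by
  have h2 := (hst.fork t r r' (k4_adj htr) (k4_adj htr') hrr' p hp q hq).mp hadj
  rcases h with h | h
  · exact h h2.1
  · exact h h2.2

lemma far_not (hst : IsStripSystem K4g G S N) (u v w x : Fin 4) (huv : u ≠ v) (hwx : w ≠ x)
    (huw : u ≠ w) (hux : u ≠ x) (hvw : v ≠ w) (hvx : v ≠ x) {p q : V}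
    (hp : p ∈ S u v) (hq : q ∈ S w x) : ¬ G.Adj p q :=
  hst.far_anti u v w x (k4_adj huv) (k4_adj hwx) huw hux hvw hvx hp hq

lemma ne_of_S (hst : IsStripSystem K4g G S N) {u v w x : Fin 4} (huv : u ≠ v) (hwx : w ≠ x)
    (hs : s(u,v) ≠ s(w,x)) {p q : V} (hp : p ∈ S u v) (hq : q ∈ S w x) : p ≠ q :=
  fun h => Set.disjoint_left.mp
    (hst.S_disj u v w x (k4_adj huv) (k4_adj hwx) hs) hp (h ▸ hq)

lemma nuv_nonempty (hst : IsStripSystem K4g G S N) {u v : Fin 4} (huv : u ≠ v) :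
    ∃ p, p ∈ S u v ∧ p ∈ N u := by
  obtain ⟨R, hR, -⟩ := hst.parity
  rcases hR u v (k4_adj huv) with h | h
  · obtain ⟨-, hall, ⟨a, ha, haN, -⟩, -⟩ := h
    exact ⟨a, hall a (List.mem_of_mem_head? (by simp [ha])), haN⟩
  · obtain ⟨-, hall, -, ⟨b, hb, hbN, -⟩⟩ := h
    exact ⟨b, memS hst (hall b (List.mem_of_mem_getLast? (by simp [hb]))), hbN⟩

lemma ends_long (hst : IsStripSystem K4g G S N) {u v : Fin 4} (huv : u ≠ v)
    (hlen : ∀ r, IsStripRung G S N u v r → 2 ≤ r.length) :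
    ∀ p ∈ S u v, ¬(p ∈ N u ∧ p ∈ N v) := by
  rintro p hp ⟨hu, hv⟩
  obtain ⟨r, hr, hpr⟩ := hst.rung_cover u v (k4_adj huv) p hp
  obtain ⟨hcp, hall, ⟨a, ha, haN, haU⟩, ⟨b, hb, hbN, hbU⟩⟩ := hr
  have hab : a ≠ b := head_ne_getLast hcp.2.1
    (hlen r ⟨hcp, hall, ⟨a, ha, haN, haU⟩, ⟨b, hb, hbN, hbU⟩⟩) ha hb
  exact hab ((haU p hpr hu).symm.trans (hbU p hpr hv))

lemma ends01 (hsp : IsSpecialK4StripSystem G S N) :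
    ∀ p ∈ S 0 1, ¬(p ∈ N 0 ∧ p ∈ N 1) :=
  ends_long hsp.strip (by decide) (fun r hr => by have := (hsp.b12 r hr).2; omega)

lemma ends23 (hsp : IsSpecialK4StripSystem G S N) :
    ∀ p ∈ S 2 3, ¬(p ∈ N 2 ∧ p ∈ N 3) :=
  ends_long hsp.strip (by decide) (fun r hr => by have := (hsp.b34 r hr).2; omega)

lemma ends03 (hsp : IsSpecialK4StripSystem G S N) :
    ∀ p ∈ S 0 3, ¬(p ∈ N 0 ∧ p ∈ N 3) :=
  ends_long hsp.strip (by decide) (fun r hr => by have := (hsp.b14 r hr).2; omega)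

lemma ends12 (hsp : IsSpecialK4StripSystem G S N) :
    ∀ p ∈ S 1 2, ¬(p ∈ N 1 ∧ p ∈ N 2) :=
  ends_long hsp.strip (by decide) (fun r hr => by have := (hsp.b23 r hr).2; omega)

lemma mem_strip {u v : Fin 4} (huv : u ≠ v) {p : V} (hp : p ∈ S u v) :
    p ∈ stripVerts K4g S := ⟨u, v, k4_adj huv, hp⟩

/-- `z` is adjacent to every vertex of `N_uv`. -/
def Good (G : SimpleGraph V) (S : Fin 4 → Fin 4 → Set V) (N : Fin 4 → Set V)
    (z : V) (u v : Fin 4) : Prop :=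
  ∀ p, p ∈ S u v → p ∈ N u → G.Adj z p

lemma pairsq (hsf : SquareFree G) (hst : IsStripSystem K4g G S N) {z z' : V}
    (hne : z ≠ z') (hnadj : ¬ G.Adj z z') (u v w x : Fin 4) (huv : u ≠ v) (hwx : w ≠ x)
    (hs : s(u,v) ≠ s(w,x))
    (h1 : Good G S N z u v) (h2 : Good G S N z' u v)
    (h3 : Good G S N z w x) (h4 : Good G S N z' w x)
    (hanti : ∀ p q, p ∈ S u v → p ∈ N u → q ∈ S w x → q ∈ N w → ¬ G.Adj p q) : False := by
  obtain ⟨p, hpS, hpN⟩ := nuv_nonempty hst huv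
  obtain ⟨q, hqS, hqN⟩ := nuv_nonempty hst hwx
  exact square hsf hne hnadj (ne_of_S hst huv hwx hs hpS hqS) (hanti p q hpS hpN hqS hqN)
    (h1 p hpS hpN) (h3 q hqS hqN) (h2 p hpS hpN) (h4 q hqS hqN)
lemma core01 (hsf : SquareFree G) (hsp : IsSpecialK4StripSystem G S N) {z z' : V}
    (hne : z ≠ z') (hnadj : ¬ G.Adj z z')
    (v0 : Fin 4) (h00 : v0 ≠ 0) (a0 : Good G S N z 0 v0) (b0 : Good G S N z' 0 v0)
    (v1 : Fin 4) (h11 : v1 ≠ 1) (a1 : Good G S N z 1 v1) (b1 : Good G S N z' 1 v1)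
    (hextra : v0 = 1 → v1 = 0 →
      ∃ v2, v2 ≠ 2 ∧ Good G S N z 2 v2 ∧ Good G S N z' 2 v2) : False := by
  have hst := hsp.strip
  fin_cases v0
  · exact absurd rfl h00
  · -- v0 = 1
    fin_cases v1
    · -- v1 = 0 : use extra
      obtain ⟨v2, h22, a2, b2⟩ := hextra rfl rfl
      fin_cases v2
      · -- v2 = 0 : edges (1,0) and (2,0), fork at 0
        exact pairsq hsf hst hne hnadj 1 0 2 0 (by decide) (by decide) (by decide)
          a1 b1 a2 b2
          (fun p q hpS hpN hqS hqN =>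
            fork_not hst 0 1 2 (by decide) (by decide) (by decide)
              (memS hst hpS) (memS hst hqS)
              (Or.inl (fun h => ends01 hsp p (memS hst hpS) ⟨h, hpN⟩)))
      · -- v2 = 1 : edges (1,0) and (2,1), fork at 1
        exact pairsq hsf hst hne hnadj 1 0 2 1 (by decide) (by decide) (by decide)
          a1 b1 a2 b2
          (fun p q hpS hpN hqS hqN =>
            fork_not hst 1 0 2 (by decide) (by decide) (by decide)
              hpS (memS hst hqS)
              (Or.inr (fun h => ends12 hsp q (memS hst hqS) ⟨h, hqN⟩)))
      · exact absurd rfl h22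
      · -- v2 = 3 : edges (0,1) and (2,3), far
        exact pairsq hsf hst hne hnadj 0 1 2 3 (by decide) (by decide) (by decide)
          a0 b0 a2 b2
          (fun p q hpS _ hqS _ =>
            far_not hst 0 1 2 3 (by decide) (by decide) (by decide) (by decide)
              (by decide) (by decide) hpS hqS)
    · exact absurd rfl h11
    · -- v1 = 2 : edges (0,1) and (1,2), fork at 1
      exact pairsq hsf hst hne hnadj 0 1 1 2 (by decide) (by decide) (by decide)
        a0 b0 a1 b1
        (fun p q hpS hpN hqS hqN =>
          fork_not hst 1 0 2 (by decide) (by decide) (by decide)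
            (memS hst hpS) hqS
            (Or.inl (fun h => ends01 hsp p hpS ⟨hpN, h⟩)))
    · -- v1 = 3 : edges (0,1) and (1,3), fork at 1
      exact pairsq hsf hst hne hnadj 0 1 1 3 (by decide) (by decide) (by decide)
        a0 b0 a1 b1
        (fun p q hpS hpN hqS hqN =>
          fork_not hst 1 0 3 (by decide) (by decide) (by decide)
            (memS hst hpS) hqS
            (Or.inl (fun h => ends01 hsp p hpS ⟨hpN, h⟩)))
  · -- v0 = 2
    fin_cases v1
    · -- v1 = 0 : edges (0,2),(1,0) fork at 0
      exact pairsq hsf hst hne hnadj 0 2 1 0 (by decide) (by decide) (by decide)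
        a0 b0 a1 b1
        (fun p q hpS hpN hqS hqN =>
          fork_not hst 0 2 1 (by decide) (by decide) (by decide)
            hpS (memS hst hqS)
            (Or.inr (fun h => ends01 hsp q (memS hst hqS) ⟨h, hqN⟩)))
    · exact absurd rfl h11
    · -- v1 = 2 : edges (0,2),(1,2) fork at 2
      exact pairsq hsf hst hne hnadj 0 2 1 2 (by decide) (by decide) (by decide)
        a0 b0 a1 b1
        (fun p q hpS hpN hqS hqN =>
          fork_not hst 2 0 1 (by decide) (by decide) (by decide)
            (memS hst hpS) (memS hst hqS)
            (Or.inr (fun h => ends12 hsp q hqS ⟨hqN, h⟩)))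
    · -- v1 = 3 : edges (0,2),(1,3) far
      exact pairsq hsf hst hne hnadj 0 2 1 3 (by decide) (by decide) (by decide)
        a0 b0 a1 b1
        (fun p q hpS _ hqS _ =>
          far_not hst 0 2 1 3 (by decide) (by decide) (by decide) (by decide)
            (by decide) (by decide) hpS hqS)
  · -- v0 = 3
    fin_cases v1
    · -- v1 = 0 : edges (0,3),(1,0) fork at 0
      exact pairsq hsf hst hne hnadj 0 3 1 0 (by decide) (by decide) (by decide)
        a0 b0 a1 b1
        (fun p q hpS hpN hqS hqN =>
          fork_not hst 0 3 1 (by decide) (by decide) (by decide)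
            hpS (memS hst hqS)
            (Or.inr (fun h => ends01 hsp q (memS hst hqS) ⟨h, hqN⟩)))
    · exact absurd rfl h11
    · -- v1 = 2 : edges (0,3),(1,2) far
      exact pairsq hsf hst hne hnadj 0 3 1 2 (by decide) (by decide) (by decide)
        a0 b0 a1 b1
        (fun p q hpS _ hqS _ =>
          far_not hst 0 3 1 2 (by decide) (by decide) (by decide) (by decide)
            (by decide) (by decide) hpS hqS)
    · -- v1 = 3 : edges (0,3),(1,3) fork at 3
      exact pairsq hsf hst hne hnadj 0 3 1 3 (by decide) (by decide) (by decide)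
        a0 b0 a1 b1
        (fun p q hpS hpN hqS hqN =>
          fork_not hst 3 0 1 (by decide) (by decide) (by decide)
            (memS hst hpS) (memS hst hqS)
            (Or.inl (fun h => ends03 hsp p hpS ⟨hpN, h⟩)))

lemma core23 (hsf : SquareFree G) (hsp : IsSpecialK4StripSystem G S N) {z z' : V}
    (hne : z ≠ z') (hnadj : ¬ G.Adj z z')
    (v2 : Fin 4) (h22 : v2 ≠ 2) (a2 : Good G S N z 2 v2) (b2 : Good G S N z' 2 v2)
    (v3 : Fin 4) (h33 : v3 ≠ 3) (a3 : Good G S N z 3 v3) (b3 : Good G S N z' 3 v3)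
    (hextra : v2 = 3 → v3 = 2 →
      ∃ v0, v0 ≠ 0 ∧ Good G S N z 0 v0 ∧ Good G S N z' 0 v0) : False := by
  have hst := hsp.strip
  fin_cases v2
  · -- v2 = 0
    fin_cases v3
    · -- v3 = 0 : edges (2,0),(3,0) fork at 0
      exact pairsq hsf hst hne hnadj 2 0 3 0 (by decide) (by decide) (by decide)
        a2 b2 a3 b3
        (fun p q hpS hpN hqS hqN =>
          fork_not hst 0 2 3 (by decide) (by decide) (by decide)
            (memS hst hpS) (memS hst hqS)
            (Or.inr (fun h => ends03 hsp q (memS hst hqS) ⟨h, hqN⟩)))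
    · -- v3 = 1 : edges (2,0),(3,1) far
      exact pairsq hsf hst hne hnadj 2 0 3 1 (by decide) (by decide) (by decide)
        a2 b2 a3 b3
        (fun p q hpS _ hqS _ =>
          far_not hst 2 0 3 1 (by decide) (by decide) (by decide) (by decide)
            (by decide) (by decide) hpS hqS)
    · -- v3 = 2 : edges (2,0),(3,2) fork at 2
      exact pairsq hsf hst hne hnadj 2 0 3 2 (by decide) (by decide) (by decide)
        a2 b2 a3 b3
        (fun p q hpS hpN hqS hqN =>
          fork_not hst 2 0 3 (by decide) (by decide) (by decide)
            hpS (memS hst hqS)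
            (Or.inr (fun h => ends23 hsp q (memS hst hqS) ⟨h, hqN⟩)))
    · exact absurd rfl h33
  · -- v2 = 1
    fin_cases v3
    · -- v3 = 0 : far
      exact pairsq hsf hst hne hnadj 2 1 3 0 (by decide) (by decide) (by decide)
        a2 b2 a3 b3
        (fun p q hpS _ hqS _ =>
          far_not hst 2 1 3 0 (by decide) (by decide) (by decide) (by decide)
            (by decide) (by decide) hpS hqS)
    · -- v3 = 1 : edges (2,1),(3,1) fork at 1
      exact pairsq hsf hst hne hnadj 2 1 3 1 (by decide) (by decide) (by decide)
        a2 b2 a3 b3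
        (fun p q hpS hpN hqS hqN =>
          fork_not hst 1 2 3 (by decide) (by decide) (by decide)
            (memS hst hpS) (memS hst hqS)
            (Or.inl (fun h => ends12 hsp p (memS hst hpS) ⟨h, hpN⟩)))
    · -- v3 = 2 : edges (2,1),(3,2) fork at 2
      exact pairsq hsf hst hne hnadj 2 1 3 2 (by decide) (by decide) (by decide)
        a2 b2 a3 b3
        (fun p q hpS hpN hqS hqN =>
          fork_not hst 2 1 3 (by decide) (by decide) (by decide)
            hpS (memS hst hqS)
            (Or.inr (fun h => ends23 hsp q (memS hst hqS) ⟨h, hqN⟩)))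
    · exact absurd rfl h33
  · exact absurd rfl h22
  · -- v2 = 3
    fin_cases v3
    · -- v3 = 0 : edges (2,3),(3,0) fork at 3
      exact pairsq hsf hst hne hnadj 2 3 3 0 (by decide) (by decide) (by decide)
        a2 b2 a3 b3
        (fun p q hpS hpN hqS hqN =>
          fork_not hst 3 2 0 (by decide) (by decide) (by decide)
            (memS hst hpS) hqS
            (Or.inl (fun h => ends23 hsp p hpS ⟨hpN, h⟩)))
    · -- v3 = 1 : edges (2,3),(3,1) fork at 3
      exact pairsq hsf hst hne hnadj 2 3 3 1 (by decide) (by decide) (by decide)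
        a2 b2 a3 b3
        (fun p q hpS hpN hqS hqN =>
          fork_not hst 3 2 1 (by decide) (by decide) (by decide)
            (memS hst hpS) hqS
            (Or.inl (fun h => ends23 hsp p hpS ⟨hpN, h⟩)))
    · -- v3 = 2 : hextra
      obtain ⟨v0, h00, a0, b0⟩ := hextra rfl rfl
      fin_cases v0
      · exact absurd rfl h00
      · -- v0 = 1 : edges (0,1),(2,3) far
        exact pairsq hsf hst hne hnadj 0 1 2 3 (by decide) (by decide) (by decide)
          a0 b0 a2 b2
          (fun p q hpS _ hqS _ =>
            far_not hst 0 1 2 3 (by decide) (by decide) (by decide) (by decide)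
              (by decide) (by decide) hpS hqS)
      · -- v0 = 2 : edges (0,2),(3,2) fork at 2
        exact pairsq hsf hst hne hnadj 0 2 3 2 (by decide) (by decide) (by decide)
          a0 b0 a3 b3
          (fun p q hpS hpN hqS hqN =>
            fork_not hst 2 0 3 (by decide) (by decide) (by decide)
              (memS hst hpS) (memS hst hqS)
              (Or.inr (fun h => ends23 hsp q (memS hst hqS) ⟨h, hqN⟩)))
      · -- v0 = 3 : edges (0,3),(3,2) fork at 3
        exact pairsq hsf hst hne hnadj 0 3 3 2 (by decide) (by decide) (by decide)
          a0 b0 a3 b3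
          (fun p q hpS hpN hqS hqN =>
            fork_not hst 3 0 2 (by decide) (by decide) (by decide)
              (memS hst hpS) hqS
              (Or.inl (fun h => ends03 hsp p hpS ⟨hpN, h⟩)))
    · exact absurd rfl h33
lemma Mgood {x : V} (hx : IsMajorStrip K4g G S N x) (u v w : Fin 4)
    (huv : u ≠ v) (huw : u ≠ w) (hvw : v ≠ w) :
    Good G S N x u v ∨ Good G S N x u w := by
  by_contra hc
  push_neg at hc
  obtain ⟨h1, h2⟩ := hc
  exact hvw (hx.2 u v w (k4_adj huv) (k4_adj huw)
    (fun hsub => h1 (fun p hpS hpN => hsub ⟨hpS, hpN⟩))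
    (fun hsub => h2 (fun p hpS hpN => hsub ⟨hpS, hpN⟩)))

lemma common_major {x x' : V} (hx : IsMajorStrip K4g G S N x)
    (hx' : IsMajorStrip K4g G S N x') (u a b c : Fin 4)
    (hau : u ≠ a) (hbu : u ≠ b) (hcu : u ≠ c) (hab : a ≠ b) (hac : a ≠ c) (hbc : b ≠ c) :
    ∃ v, v ≠ u ∧ Good G S N x u v ∧ Good G S N x' u v := by
  have K : ∀ y : V, IsMajorStrip K4g G S N y →
      (Good G S N y u a ∧ Good G S N y u b) ∨ (Good G S N y u a ∧ Good G S N y u c) ∨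
      (Good G S N y u b ∧ Good G S N y u c) := by
    intro y hy
    rcases Mgood hy u a b hau hbu hab with h | h <;>
      rcases Mgood hy u a c hau hcu hac with h' | h' <;>
      rcases Mgood hy u b c hbu hcu hbc with h'' | h'' <;> tauto
  rcases K x hx with ⟨p, q⟩ | ⟨p, q⟩ | ⟨p, q⟩ <;>
    rcases K x' hx' with ⟨p', q'⟩ | ⟨p', q'⟩ | ⟨p', q'⟩ <;>
    first
      | exact ⟨a, hau.symm, p, p'⟩
      | exact ⟨b, hbu.symm, q, p'⟩
      | exact ⟨c, hcu.symm, q, q'⟩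
      | exact ⟨b, hbu.symm, p, q'⟩
      | exact ⟨b, hbu.symm, p, p'⟩

lemma O12_good (hst : IsStripSystem K4g G S N) {z : V} (hz : z ∈ OsetK4 G S N 0 1)
    (u v : Fin 4) (hu : u = 0 ∨ u = 1) (huv : u ≠ v) (hs : s(u,v) ≠ s((0 : Fin 4),(1 : Fin 4))) :
    Good G S N z u v := by
  intro p hpS hpN
  apply hz.2.1 p
  refine ⟨?_, fun hmem => Set.disjoint_left.mp
    (hst.S_disj u v 0 1 (k4_adj huv) (k4_adj (by decide)) hs) hpS hmem⟩
  rcases hu with h | h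
  · subst h; exact Or.inl hpN
  · subst h; exact Or.inr hpN

lemma O12_good20 (hsp : IsSpecialK4StripSystem G S N) {z : V}
    (hz : z ∈ OsetK4 G S N 0 1) : Good G S N z 2 0 := by
  intro p hpS hpN
  have hp02 : p ∈ S 0 2 := memS hsp.strip hpS
  exact hz.2.1 p ⟨Or.inl (hsp.a13.1 hp02), fun hmem => Set.disjoint_left.mp
    (hsp.strip.S_disj 0 2 0 1 (k4_adj (by decide)) (k4_adj (by decide)) (by decide))
    hp02 hmem⟩

lemma O12_good31 (hsp : IsSpecialK4StripSystem G S N) {z : V}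
    (hz : z ∈ OsetK4 G S N 0 1) : Good G S N z 3 1 := by
  intro p hpS hpN
  have hp13 : p ∈ S 1 3 := memS hsp.strip hpS
  exact hz.2.1 p ⟨Or.inr (hsp.a24.1 hp13), fun hmem => Set.disjoint_left.mp
    (hsp.strip.S_disj 1 3 0 1 (k4_adj (by decide)) (k4_adj (by decide)) (by decide))
    hp13 hmem⟩

lemma O34_good (hst : IsStripSystem K4g G S N) {z : V} (hz : z ∈ OsetK4 G S N 2 3)
    (u v : Fin 4) (hu : u = 2 ∨ u = 3) (huv : u ≠ v) (hs : s(u,v) ≠ s((2 : Fin 4),(3 : Fin 4))) :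
    Good G S N z u v := by
  intro p hpS hpN
  apply hz.2.1 p
  refine ⟨?_, fun hmem => Set.disjoint_left.mp
    (hst.S_disj u v 2 3 (k4_adj huv) (k4_adj (by decide)) hs) hpS hmem⟩
  rcases hu with h | h
  · subst h; exact Or.inl hpN
  · subst h; exact Or.inr hpN

lemma cliqueO12M (hsf : SquareFree G) (hsp : IsSpecialK4StripSystem G S N) :
    G.IsClique (OsetK4 G S N 0 1 ∪ {x | IsMajorStrip K4g G S N x}) := by
  have hst := hsp.strip
  intro z hz z' hz' hne
  by_contra hnadj
  rcases hz with hzO | hzM <;> rcases hz' with hz'O | hz'M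
  · exact core01 hsf hsp hne hnadj 2 (by decide)
      (O12_good hst hzO 0 2 (Or.inl rfl) (by decide) (by decide))
      (O12_good hst hz'O 0 2 (Or.inl rfl) (by decide) (by decide))
      3 (by decide)
      (O12_good hst hzO 1 3 (Or.inr rfl) (by decide) (by decide))
      (O12_good hst hz'O 1 3 (Or.inr rfl) (by decide) (by decide))
      (fun h _ => absurd h (by decide))
  · rcases Mgood hz'M 0 2 3 (by decide) (by decide) (by decide) with g0 | g0 <;>
      rcases Mgood hz'M 1 2 3 (by decide) (by decide) (by decide) with g1 | g1
    · exact core01 hsf hsp hne hnadj 2 (by decide)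
        (O12_good hst hzO 0 2 (Or.inl rfl) (by decide) (by decide)) g0
        2 (by decide)
        (O12_good hst hzO 1 2 (Or.inr rfl) (by decide) (by decide)) g1
        (fun h _ => absurd h (by decide))
    · exact core01 hsf hsp hne hnadj 2 (by decide)
        (O12_good hst hzO 0 2 (Or.inl rfl) (by decide) (by decide)) g0
        3 (by decide)
        (O12_good hst hzO 1 3 (Or.inr rfl) (by decide) (by decide)) g1
        (fun h _ => absurd h (by decide))
    · exact core01 hsf hsp hne hnadj 3 (by decide)
        (O12_good hst hzO 0 3 (Or.inl rfl) (by decide) (by decide)) g0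
        2 (by decide)
        (O12_good hst hzO 1 2 (Or.inr rfl) (by decide) (by decide)) g1
        (fun h _ => absurd h (by decide))
    · exact core01 hsf hsp hne hnadj 3 (by decide)
        (O12_good hst hzO 0 3 (Or.inl rfl) (by decide) (by decide)) g0
        3 (by decide)
        (O12_good hst hzO 1 3 (Or.inr rfl) (by decide) (by decide)) g1
        (fun h _ => absurd h (by decide))
  · rcases Mgood hzM 0 2 3 (by decide) (by decide) (by decide) with g0 | g0 <;>
      rcases Mgood hzM 1 2 3 (by decide) (by decide) (by decide) with g1 | g1
    · exact core01 hsf hsp hne hnadj 2 (by decide)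
        g0 (O12_good hst hz'O 0 2 (Or.inl rfl) (by decide) (by decide))
        2 (by decide)
        g1 (O12_good hst hz'O 1 2 (Or.inr rfl) (by decide) (by decide))
        (fun h _ => absurd h (by decide))
    · exact core01 hsf hsp hne hnadj 2 (by decide)
        g0 (O12_good hst hz'O 0 2 (Or.inl rfl) (by decide) (by decide))
        3 (by decide)
        g1 (O12_good hst hz'O 1 3 (Or.inr rfl) (by decide) (by decide))
        (fun h _ => absurd h (by decide))
    · exact core01 hsf hsp hne hnadj 3 (by decide)
        g0 (O12_good hst hz'O 0 3 (Or.inl rfl) (by decide) (by decide))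
        2 (by decide)
        g1 (O12_good hst hz'O 1 2 (Or.inr rfl) (by decide) (by decide))
        (fun h _ => absurd h (by decide))
    · exact core01 hsf hsp hne hnadj 3 (by decide)
        g0 (O12_good hst hz'O 0 3 (Or.inl rfl) (by decide) (by decide))
        3 (by decide)
        g1 (O12_good hst hz'O 1 3 (Or.inr rfl) (by decide) (by decide))
        (fun h _ => absurd h (by decide))
  · obtain ⟨v0, h00, a0, b0⟩ := common_major hzM hz'M 0 1 2 3
      (by decide) (by decide) (by decide) (by decide) (by decide) (by decide)
    obtain ⟨v1, h11, a1, b1⟩ := common_major hzM hz'M 1 0 2 3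
      (by decide) (by decide) (by decide) (by decide) (by decide) (by decide)
    exact core01 hsf hsp hne hnadj v0 h00 a0 b0 v1 h11 a1 b1
      (fun _ _ => common_major hzM hz'M 2 0 1 3
        (by decide) (by decide) (by decide) (by decide) (by decide) (by decide))

lemma cliqueO34M (hsf : SquareFree G) (hsp : IsSpecialK4StripSystem G S N) :
    G.IsClique (OsetK4 G S N 2 3 ∪ {x | IsMajorStrip K4g G S N x}) := by
  have hst := hsp.strip
  intro z hz z' hz' hne
  by_contra hnadj
  rcases hz with hzO | hzM <;> rcases hz' with hz'O | hz'M
  · exact core23 hsf hsp hne hnadj 0 (by decide)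
      (O34_good hst hzO 2 0 (Or.inl rfl) (by decide) (by decide))
      (O34_good hst hz'O 2 0 (Or.inl rfl) (by decide) (by decide))
      1 (by decide)
      (O34_good hst hzO 3 1 (Or.inr rfl) (by decide) (by decide))
      (O34_good hst hz'O 3 1 (Or.inr rfl) (by decide) (by decide))
      (fun h _ => absurd h (by decide))
  · rcases Mgood hz'M 2 0 1 (by decide) (by decide) (by decide) with g0 | g0 <;>
      rcases Mgood hz'M 3 0 1 (by decide) (by decide) (by decide) with g1 | g1
    · exact core23 hsf hsp hne hnadj 0 (by decide)
        (O34_good hst hzO 2 0 (Or.inl rfl) (by decide) (by decide)) g0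
        0 (by decide)
        (O34_good hst hzO 3 0 (Or.inr rfl) (by decide) (by decide)) g1
        (fun h _ => absurd h (by decide))
    · exact core23 hsf hsp hne hnadj 0 (by decide)
        (O34_good hst hzO 2 0 (Or.inl rfl) (by decide) (by decide)) g0
        1 (by decide)
        (O34_good hst hzO 3 1 (Or.inr rfl) (by decide) (by decide)) g1
        (fun h _ => absurd h (by decide))
    · exact core23 hsf hsp hne hnadj 1 (by decide)
        (O34_good hst hzO 2 1 (Or.inl rfl) (by decide) (by decide)) g0
        0 (by decide)
        (O34_good hst hzO 3 0 (Or.inr rfl) (by decide) (by decide)) g1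
        (fun h _ => absurd h (by decide))
    · exact core23 hsf hsp hne hnadj 1 (by decide)
        (O34_good hst hzO 2 1 (Or.inl rfl) (by decide) (by decide)) g0
        1 (by decide)
        (O34_good hst hzO 3 1 (Or.inr rfl) (by decide) (by decide)) g1
        (fun h _ => absurd h (by decide))
  · rcases Mgood hzM 2 0 1 (by decide) (by decide) (by decide) with g0 | g0 <;>
      rcases Mgood hzM 3 0 1 (by decide) (by decide) (by decide) with g1 | g1
    · exact core23 hsf hsp hne hnadj 0 (by decide)
        g0 (O34_good hst hz'O 2 0 (Or.inl rfl) (by decide) (by decide))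
        0 (by decide)
        g1 (O34_good hst hz'O 3 0 (Or.inr rfl) (by decide) (by decide))
        (fun h _ => absurd h (by decide))
    · exact core23 hsf hsp hne hnadj 0 (by decide)
        g0 (O34_good hst hz'O 2 0 (Or.inl rfl) (by decide) (by decide))
        1 (by decide)
        g1 (O34_good hst hz'O 3 1 (Or.inr rfl) (by decide) (by decide))
        (fun h _ => absurd h (by decide))
    · exact core23 hsf hsp hne hnadj 1 (by decide)
        g0 (O34_good hst hz'O 2 1 (Or.inl rfl) (by decide) (by decide))
        0 (by decide)
        g1 (O34_good hst hz'O 3 0 (Or.inr rfl) (by decide) (by decide))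
        (fun h _ => absurd h (by decide))
    · exact core23 hsf hsp hne hnadj 1 (by decide)
        g0 (O34_good hst hz'O 2 1 (Or.inl rfl) (by decide) (by decide))
        1 (by decide)
        g1 (O34_good hst hz'O 3 1 (Or.inr rfl) (by decide) (by decide))
        (fun h _ => absurd h (by decide))
  · obtain ⟨v2, h22, a2, b2⟩ := common_major hzM hz'M 2 0 1 3
      (by decide) (by decide) (by decide) (by decide) (by decide) (by decide)
    obtain ⟨v3, h33, a3, b3⟩ := common_major hzM hz'M 3 0 1 2
      (by decide) (by decide) (by decide) (by decide) (by decide) (by decide)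
    exact core23 hsf hsp hne hnadj v2 h22 a2 b2 v3 h33 a3 b3
      (fun _ _ => common_major hzM hz'M 0 1 2 3
        (by decide) (by decide) (by decide) (by decide) (by decide) (by decide))
lemma goodS02_01 (hsp : IsSpecialK4StripSystem G S N) {a : V} (ha : a ∈ S 0 2) :
    Good G S N a 0 1 := fun p hpS hpN =>
  fork_adj hsp.strip 0 2 1 (by decide) (by decide) (by decide) ha hpS (hsp.a13.1 ha) hpN

lemma goodS02_23 (hsp : IsSpecialK4StripSystem G S N) {a : V} (ha : a ∈ S 0 2) :
    Good G S N a 2 3 := fun p hpS hpN =>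
  fork_adj hsp.strip 2 0 3 (by decide) (by decide) (by decide) (memS hsp.strip ha) hpS
    (hsp.a13.2 ha) hpN

lemma goodS13_10 (hsp : IsSpecialK4StripSystem G S N) {b : V} (hb : b ∈ S 1 3) :
    Good G S N b 1 0 := fun p hpS hpN =>
  fork_adj hsp.strip 1 3 0 (by decide) (by decide) (by decide) hb hpS (hsp.a24.1 hb) hpN

lemma goodS13_32 (hsp : IsSpecialK4StripSystem G S N) {b : V} (hb : b ∈ S 1 3) :
    Good G S N b 3 2 := fun p hpS hpN =>
  fork_adj hsp.strip 3 1 2 (by decide) (by decide) (by decide) (memS hsp.strip hb) hpS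
    (hsp.a24.2 hb) hpN

lemma S02_pair (hsf : SquareFree G) (hsp : IsSpecialK4StripSystem G S N) {a a' : V}
    (ha : a ∈ S 0 2) (ha' : a' ∈ S 0 2) (hne : a ≠ a') (hnadj : ¬ G.Adj a a') : False :=
  pairsq hsf hsp.strip hne hnadj 0 1 2 3 (by decide) (by decide) (by decide)
    (goodS02_01 hsp ha) (goodS02_01 hsp ha') (goodS02_23 hsp ha) (goodS02_23 hsp ha')
    (fun p q hpS _ hqS _ =>
      far_not hsp.strip 0 1 2 3 (by decide) (by decide) (by decide) (by decide)
        (by decide) (by decide) hpS hqS)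

lemma S13_pair (hsf : SquareFree G) (hsp : IsSpecialK4StripSystem G S N) {b b' : V}
    (hb : b ∈ S 1 3) (hb' : b' ∈ S 1 3) (hne : b ≠ b') (hnadj : ¬ G.Adj b b') : False :=
  pairsq hsf hsp.strip hne hnadj 1 0 3 2 (by decide) (by decide) (by decide)
    (goodS13_10 hsp hb) (goodS13_10 hsp hb') (goodS13_32 hsp hb) (goodS13_32 hsp hb')
    (fun p q hpS _ hqS _ =>
      far_not hsp.strip 1 0 3 2 (by decide) (by decide) (by decide) (by decide)
        (by decide) (by decide) hpS hqS)

lemma M_S02 (hsf : SquareFree G) (hsp : IsSpecialK4StripSystem G S N) {z a : V}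
    (hz : IsMajorStrip K4g G S N z) (ha : a ∈ S 0 2) (hnadj : ¬ G.Adj z a) : False := by
  have hst := hsp.strip
  have h02 : ¬ Good G S N z 0 2 := fun g => hnadj (g a ha (hsp.a13.1 ha))
  have h20 : ¬ Good G S N z 2 0 := fun g => hnadj (g a (memS hst ha) (hsp.a13.2 ha))
  have g01 : Good G S N z 0 1 :=
    (Mgood hz 0 1 2 (by decide) (by decide) (by decide)).resolve_right h02
  have g23 : Good G S N z 2 3 :=
    (Mgood hz 2 3 0 (by decide) (by decide) (by decide)).resolve_right h20
  have hza : z ≠ a := fun h => hz.1 (h ▸ mem_strip (by decide : (0:Fin 4) ≠ 2) ha)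
  exact pairsq hsf hst hza hnadj 0 1 2 3 (by decide) (by decide) (by decide)
    g01 (goodS02_01 hsp ha) g23 (goodS02_23 hsp ha)
    (fun p q hpS _ hqS _ =>
      far_not hst 0 1 2 3 (by decide) (by decide) (by decide) (by decide)
        (by decide) (by decide) hpS hqS)

lemma M_S13 (hsf : SquareFree G) (hsp : IsSpecialK4StripSystem G S N) {z b : V}
    (hz : IsMajorStrip K4g G S N z) (hb : b ∈ S 1 3) (hnadj : ¬ G.Adj z b) : False := by
  have hst := hsp.strip
  have h13 : ¬ Good G S N z 1 3 := fun g => hnadj (g b hb (hsp.a24.1 hb))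
  have h31 : ¬ Good G S N z 3 1 := fun g => hnadj (g b (memS hst hb) (hsp.a24.2 hb))
  have g10 : Good G S N z 1 0 :=
    (Mgood hz 1 0 3 (by decide) (by decide) (by decide)).resolve_right h13
  have g32 : Good G S N z 3 2 :=
    (Mgood hz 3 2 1 (by decide) (by decide) (by decide)).resolve_right h31
  have hzb : z ≠ b := fun h => hz.1 (h ▸ mem_strip (by decide : (1:Fin 4) ≠ 3) hb)
  exact pairsq hsf hst hzb hnadj 1 0 3 2 (by decide) (by decide) (by decide)
    g10 (goodS13_10 hsp hb) g32 (goodS13_32 hsp hb)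
    (fun p q hpS _ hqS _ =>
      far_not hst 1 0 3 2 (by decide) (by decide) (by decide) (by decide)
        (by decide) (by decide) hpS hqS)

lemma OM_notin {z : V}
    (hz : z ∈ OsetK4 G S N 0 1 ∪ {x | IsMajorStrip K4g G S N x}) :
    z ∉ stripVerts K4g S := by
  rcases hz with h | h
  · exact h.1
  · exact h.1

lemma clique_union {A B : Set V} (hA : G.IsClique A) (hB : G.IsClique B)
    (hAB : ∀ a ∈ A, ∀ b ∈ B, a ≠ b → G.Adj a b) : G.IsClique (A ∪ B) := by
  intro x hx y hy hne
  rcases hx with hx | hx <;> rcases hy with hy | hy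
  · exact hA hx hy hne
  · exact hAB x hx y hy hne
  · exact (hAB y hy x hx hne.symm).symm
  · exact hB hx hy hne
lemma notBothBad0 (hsf : SquareFree G) (hsp : IsSpecialK4StripSystem G S N)
    (hcl : G.IsClique (OsetK4 G S N 0 1 ∪ {x | IsMajorStrip K4g G S N x}))
    (hA : ¬((∀ u ∈ S 0 1 ∩ N 0, ∀ u' ∈ S 0 1 ∩ N 0, u ≠ u' → G.Adj u u') ∧
        (∀ z ∈ OsetK4 G S N 0 1 ∪ {x | IsMajorStrip K4g G S N x}, Good G S N z 0 1)))
    (hB : ¬((∀ u ∈ S 0 3 ∩ N 0, ∀ u' ∈ S 0 3 ∩ N 0, u ≠ u' → G.Adj u u') ∧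
        (∀ z ∈ OsetK4 G S N 0 1 ∪ {x | IsMajorStrip K4g G S N x}, Good G S N z 0 3))) :
    False := by
  have hst := hsp.strip
  rcases not_and_or.mp hA with hA | hA <;> rcases not_and_or.mp hB with hB | hB
  · push_neg at hA hB
    obtain ⟨u, hu, u', hu', hneu, hnadju⟩ := hA
    obtain ⟨w, hw, w', hw', hnew, hnadjw⟩ := hB
    exact square hsf hneu hnadju hnew hnadjw
      (fork_adj hst 0 1 3 (by decide) (by decide) (by decide) hu.1 hw.1 hu.2 hw.2)
      (fork_adj hst 0 1 3 (by decide) (by decide) (by decide) hu.1 hw'.1 hu.2 hw'.2)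
      (fork_adj hst 0 1 3 (by decide) (by decide) (by decide) hu'.1 hw.1 hu'.2 hw.2)
      (fork_adj hst 0 1 3 (by decide) (by decide) (by decide) hu'.1 hw'.1 hu'.2 hw'.2)
  · push_neg at hA
    obtain ⟨u, hu, u', hu', hneu, hnadju⟩ := hA
    push_neg at hB
    obtain ⟨z', hz'OM, hng⟩ := hB
    unfold Good at hng; push_neg at hng
    obtain ⟨w, hwS, hwN, hnadjw⟩ := hng
    have hz'M : IsMajorStrip K4g G S N z' := by
      rcases hz'OM with hO | hM
      · exact absurd (O12_good hst hO 0 3 (Or.inl rfl) (by decide) (by decide) w hwS hwN)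
          hnadjw
      · exact hM
    have g01 : Good G S N z' 0 1 :=
      (Mgood hz'M 0 1 3 (by decide) (by decide) (by decide)).resolve_right
        (fun g => hnadjw (g w hwS hwN))
    have hz'w : z' ≠ w := fun h => hz'M.1 (h ▸ mem_strip (by decide : (0:Fin 4) ≠ 3) hwS)
    exact square hsf hneu hnadju hz'w hnadjw
      ((g01 u hu.1 hu.2).symm)
      (fork_adj hst 0 1 3 (by decide) (by decide) (by decide) hu.1 hwS hu.2 hwN)
      ((g01 u' hu'.1 hu'.2).symm)
      (fork_adj hst 0 1 3 (by decide) (by decide) (by decide) hu'.1 hwS hu'.2 hwN)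
  · push_neg at hB
    obtain ⟨w, hw, w', hw', hnew, hnadjw⟩ := hB
    push_neg at hA
    obtain ⟨z, hzOM, hng⟩ := hA
    unfold Good at hng; push_neg at hng
    obtain ⟨u, huS, huN, hnadju⟩ := hng
    have g03 : Good G S N z 0 3 := by
      rcases hzOM with hO | hM
      · exact O12_good hst hO 0 3 (Or.inl rfl) (by decide) (by decide)
      · exact (Mgood hM 0 1 3 (by decide) (by decide) (by decide)).resolve_left
          (fun g => hnadju (g u huS huN))
    have hzu : z ≠ u := fun h => OM_notin hzOM (h ▸ mem_strip (by decide : (0:Fin 4) ≠ 1) huS)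
    exact square hsf hzu hnadju hnew hnadjw
      (g03 w hw.1 hw.2) (g03 w' hw'.1 hw'.2)
      (fork_adj hst 0 1 3 (by decide) (by decide) (by decide) huS hw.1 huN hw.2)
      (fork_adj hst 0 1 3 (by decide) (by decide) (by decide) huS hw'.1 huN hw'.2)
  · push_neg at hA hB
    obtain ⟨z, hzOM, hngA⟩ := hA
    obtain ⟨z', hz'OM, hngB⟩ := hB
    unfold Good at hngA hngB; push_neg at hngA hngB
    obtain ⟨u, huS, huN, hnadju⟩ := hngA
    obtain ⟨w, hwS, hwN, hnadjw⟩ := hngB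
    have hz'M : IsMajorStrip K4g G S N z' := by
      rcases hz'OM with hO | hM
      · exact absurd (O12_good hst hO 0 3 (Or.inl rfl) (by decide) (by decide) w hwS hwN)
          hnadjw
      · exact hM
    have g01 : Good G S N z' 0 1 :=
      (Mgood hz'M 0 1 3 (by decide) (by decide) (by decide)).resolve_right
        (fun g => hnadjw (g w hwS hwN))
    have g03 : Good G S N z 0 3 := by
      rcases hzOM with hO | hM
      · exact O12_good hst hO 0 3 (Or.inl rfl) (by decide) (by decide)
      · exact (Mgood hM 0 1 3 (by decide) (by decide) (by decide)).resolve_left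
          (fun g => hnadju (g u huS huN))
    have hnezz' : z ≠ z' := by
      intro h; subst h
      exact hnadju (g01 u huS huN)
    have hadj := hcl hzOM hz'OM hnezz'
    have hzu : z ≠ u := fun h => OM_notin hzOM (h ▸ mem_strip (by decide : (0:Fin 4) ≠ 1) huS)
    have hz'w : z' ≠ w := fun h => hz'M.1 (h ▸ mem_strip (by decide : (0:Fin 4) ≠ 3) hwS)
    exact square hsf (Ne.symm hzu) (fun h => hnadju h.symm) hz'w hnadjw
      ((g01 u huS huN).symm)
      (fork_adj hst 0 1 3 (by decide) (by decide) (by decide) huS hwS huN hwN)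
      hadj (g03 w hwS hwN)

lemma notBothBad1 (hsf : SquareFree G) (hsp : IsSpecialK4StripSystem G S N)
    (hcl : G.IsClique (OsetK4 G S N 0 1 ∪ {x | IsMajorStrip K4g G S N x}))
    (hA : ¬((∀ u ∈ S 1 0 ∩ N 1, ∀ u' ∈ S 1 0 ∩ N 1, u ≠ u' → G.Adj u u') ∧
        (∀ z ∈ OsetK4 G S N 0 1 ∪ {x | IsMajorStrip K4g G S N x}, Good G S N z 1 0)))
    (hB : ¬((∀ u ∈ S 1 2 ∩ N 1, ∀ u' ∈ S 1 2 ∩ N 1, u ≠ u' → G.Adj u u') ∧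
        (∀ z ∈ OsetK4 G S N 0 1 ∪ {x | IsMajorStrip K4g G S N x}, Good G S N z 1 2))) :
    False := by
  have hst := hsp.strip
  rcases not_and_or.mp hA with hA | hA <;> rcases not_and_or.mp hB with hB | hB
  · push_neg at hA hB
    obtain ⟨u, hu, u', hu', hneu, hnadju⟩ := hA
    obtain ⟨w, hw, w', hw', hnew, hnadjw⟩ := hB
    exact square hsf hneu hnadju hnew hnadjw
      (fork_adj hst 1 0 2 (by decide) (by decide) (by decide) hu.1 hw.1 hu.2 hw.2)
      (fork_adj hst 1 0 2 (by decide) (by decide) (by decide) hu.1 hw'.1 hu.2 hw'.2)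
      (fork_adj hst 1 0 2 (by decide) (by decide) (by decide) hu'.1 hw.1 hu'.2 hw.2)
      (fork_adj hst 1 0 2 (by decide) (by decide) (by decide) hu'.1 hw'.1 hu'.2 hw'.2)
  · push_neg at hA
    obtain ⟨u, hu, u', hu', hneu, hnadju⟩ := hA
    push_neg at hB
    obtain ⟨z', hz'OM, hng⟩ := hB
    unfold Good at hng; push_neg at hng
    obtain ⟨w, hwS, hwN, hnadjw⟩ := hng
    have hz'M : IsMajorStrip K4g G S N z' := by
      rcases hz'OM with hO | hM
      · exact absurd (O12_good hst hO 1 2 (Or.inr rfl) (by decide) (by decide) w hwS hwN)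
          hnadjw
      · exact hM
    have g10 : Good G S N z' 1 0 :=
      (Mgood hz'M 1 0 2 (by decide) (by decide) (by decide)).resolve_right
        (fun g => hnadjw (g w hwS hwN))
    have hz'w : z' ≠ w := fun h => hz'M.1 (h ▸ mem_strip (by decide : (1:Fin 4) ≠ 2) hwS)
    exact square hsf hneu hnadju hz'w hnadjw
      ((g10 u hu.1 hu.2).symm)
      (fork_adj hst 1 0 2 (by decide) (by decide) (by decide) hu.1 hwS hu.2 hwN)
      ((g10 u' hu'.1 hu'.2).symm)
      (fork_adj hst 1 0 2 (by decide) (by decide) (by decide) hu'.1 hwS hu'.2 hwN)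
  · push_neg at hB
    obtain ⟨w, hw, w', hw', hnew, hnadjw⟩ := hB
    push_neg at hA
    obtain ⟨z, hzOM, hng⟩ := hA
    unfold Good at hng; push_neg at hng
    obtain ⟨u, huS, huN, hnadju⟩ := hng
    have g12 : Good G S N z 1 2 := by
      rcases hzOM with hO | hM
      · exact O12_good hst hO 1 2 (Or.inr rfl) (by decide) (by decide)
      · exact (Mgood hM 1 0 2 (by decide) (by decide) (by decide)).resolve_left
          (fun g => hnadju (g u huS huN))
    have hzu : z ≠ u := fun h => OM_notin hzOM (h ▸ mem_strip (by decide : (1:Fin 4) ≠ 0) huS)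
    exact square hsf hzu hnadju hnew hnadjw
      (g12 w hw.1 hw.2) (g12 w' hw'.1 hw'.2)
      (fork_adj hst 1 0 2 (by decide) (by decide) (by decide) huS hw.1 huN hw.2)
      (fork_adj hst 1 0 2 (by decide) (by decide) (by decide) huS hw'.1 huN hw'.2)
  · push_neg at hA hB
    obtain ⟨z, hzOM, hngA⟩ := hA
    obtain ⟨z', hz'OM, hngB⟩ := hB
    unfold Good at hngA hngB; push_neg at hngA hngB
    obtain ⟨u, huS, huN, hnadju⟩ := hngA
    obtain ⟨w, hwS, hwN, hnadjw⟩ := hngB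
    have hz'M : IsMajorStrip K4g G S N z' := by
      rcases hz'OM with hO | hM
      · exact absurd (O12_good hst hO 1 2 (Or.inr rfl) (by decide) (by decide) w hwS hwN)
          hnadjw
      · exact hM
    have g10 : Good G S N z' 1 0 :=
      (Mgood hz'M 1 0 2 (by decide) (by decide) (by decide)).resolve_right
        (fun g => hnadjw (g w hwS hwN))
    have g12 : Good G S N z 1 2 := by
      rcases hzOM with hO | hM
      · exact O12_good hst hO 1 2 (Or.inr rfl) (by decide) (by decide)
      · exact (Mgood hM 1 0 2 (by decide) (by decide) (by decide)).resolve_left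
          (fun g => hnadju (g u huS huN))
    have hnezz' : z ≠ z' := by
      intro h; subst h
      exact hnadju (g10 u huS huN)
    have hadj := hcl hzOM hz'OM hnezz'
    have hzu : z ≠ u := fun h => OM_notin hzOM (h ▸ mem_strip (by decide : (1:Fin 4) ≠ 0) huS)
    have hz'w : z' ≠ w := fun h => hz'M.1 (h ▸ mem_strip (by decide : (1:Fin 4) ≠ 2) hwS)
    exact square hsf (Ne.symm hzu) (fun h => hnadju h.symm) hz'w hnadjw
      ((g10 u huS huN).symm)
      (fork_adj hst 1 0 2 (by decide) (by decide) (by decide) huS hwS huN hwN)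
      hadj (g12 w hwS hwN)

end StripAux
/-- cliques in a special `K₄`-strip system. -/
theorem specialK4_cliques
    {V : Type*} (G : SimpleGraph V)
    (hsf : SquareFree G) (hberge : IsBerge G)
    (S : Fin 4 → Fin 4 → Set V) (N : Fin 4 → Set V)
    (hS : IsSpecialK4StripSystem G S N)
    (M : Set V) (hM : M = {x | IsMajorStrip K4g G S N x}) :
    (G.IsClique (OsetK4 G S N 0 1 ∪ M) ∧ G.IsClique (OsetK4 G S N 2 3 ∪ M)) ∧
    ((∃ k : Fin 4, k ≠ 0 ∧
        G.IsClique (OsetK4 G S N 0 1 ∪ M ∪ (N 0 \ (S 0 k ∩ N 0)))) ∧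
     (∃ l : Fin 4, l ≠ 1 ∧
        G.IsClique (OsetK4 G S N 0 1 ∪ M ∪ (N 1 \ (S 1 l ∩ N 1))))) := by
  subst hM
  have hst := hS.strip
  have hcl12 := cliqueO12M hsf hS
  have hcl34 := cliqueO34M hsf hS
  refine ⟨⟨hcl12, hcl34⟩, ?_, ?_⟩
  · by_cases hA : (∀ u ∈ S 0 1 ∩ N 0, ∀ u' ∈ S 0 1 ∩ N 0, u ≠ u' → G.Adj u u') ∧
        (∀ z ∈ OsetK4 G S N 0 1 ∪ {x | IsMajorStrip K4g G S N x}, Good G S N z 0 1)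
    · refine ⟨3, by decide, ?_⟩
      have hsub : N 0 \ (S 0 3 ∩ N 0) ⊆ (S 0 1 ∩ N 0) ∪ (S 0 2 ∩ N 0) := by
        intro x hx
        obtain ⟨v, hadj, hxv⟩ := hst.N_sub 0 hx.1
        fin_cases v
        · exact absurd rfl hadj
        · exact Or.inl ⟨hxv, hx.1⟩
        · exact Or.inr ⟨hxv, hx.1⟩
        · exact absurd ⟨hxv, hx.1⟩ hx.2
      have hinner : G.IsClique ((S 0 1 ∩ N 0) ∪ (S 0 2 ∩ N 0)) :=
        clique_union (fun x hx y hy hne => hA.1 x hx y hy hne)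
          (fun x hx y hy hne => by by_contra hn; exact S02_pair hsf hS hx.1 hy.1 hne hn)
          (fun a ha b hb _ => fork_adj hst 0 1 2 (by decide) (by decide) (by decide)
            ha.1 hb.1 ha.2 hb.2)
      have hcross : ∀ a ∈ OsetK4 G S N 0 1 ∪ {x | IsMajorStrip K4g G S N x},
          ∀ b ∈ (S 0 1 ∩ N 0) ∪ (S 0 2 ∩ N 0), a ≠ b → G.Adj a b := by
        intro a ha b hb _
        rcases hb with hb | hb
        · exact hA.2 a ha b hb.1 hb.2
        · rcases ha with hO | hM
          · exact O12_good hst hO 0 2 (Or.inl rfl) (by decide) (by decide) b hb.1 hb.2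
          · by_contra hn; exact M_S02 hsf hS hM hb.1 hn
      exact Set.Pairwise.mono (Set.union_subset_union_right _ hsub)
        (clique_union hcl12 hinner hcross)
    · have hB : (∀ u ∈ S 0 3 ∩ N 0, ∀ u' ∈ S 0 3 ∩ N 0, u ≠ u' → G.Adj u u') ∧
          (∀ z ∈ OsetK4 G S N 0 1 ∪ {x | IsMajorStrip K4g G S N x}, Good G S N z 0 3) := by
        by_contra hB
        exact notBothBad0 hsf hS hcl12 hA hB
      refine ⟨1, by decide, ?_⟩
      have hsub : N 0 \ (S 0 1 ∩ N 0) ⊆ (S 0 2 ∩ N 0) ∪ (S 0 3 ∩ N 0) := by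
        intro x hx
        obtain ⟨v, hadj, hxv⟩ := hst.N_sub 0 hx.1
        fin_cases v
        · exact absurd rfl hadj
        · exact absurd ⟨hxv, hx.1⟩ hx.2
        · exact Or.inl ⟨hxv, hx.1⟩
        · exact Or.inr ⟨hxv, hx.1⟩
      have hinner : G.IsClique ((S 0 2 ∩ N 0) ∪ (S 0 3 ∩ N 0)) :=
        clique_union
          (fun x hx y hy hne => by by_contra hn; exact S02_pair hsf hS hx.1 hy.1 hne hn)
          (fun x hx y hy hne => hB.1 x hx y hy hne)
          (fun a ha b hb _ => (fork_adj hst 0 3 2 (by decide) (by decide) (by decide)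
            hb.1 ha.1 hb.2 ha.2).symm)
      have hcross : ∀ a ∈ OsetK4 G S N 0 1 ∪ {x | IsMajorStrip K4g G S N x},
          ∀ b ∈ (S 0 2 ∩ N 0) ∪ (S 0 3 ∩ N 0), a ≠ b → G.Adj a b := by
        intro a ha b hb _
        rcases hb with hb | hb
        · rcases ha with hO | hM
          · exact O12_good hst hO 0 2 (Or.inl rfl) (by decide) (by decide) b hb.1 hb.2
          · by_contra hn; exact M_S02 hsf hS hM hb.1 hn
        · exact hB.2 a ha b hb.1 hb.2
      exact Set.Pairwise.mono (Set.union_subset_union_right _ hsub)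
        (clique_union hcl12 hinner hcross)
  · by_cases hA : (∀ u ∈ S 1 0 ∩ N 1, ∀ u' ∈ S 1 0 ∩ N 1, u ≠ u' → G.Adj u u') ∧
        (∀ z ∈ OsetK4 G S N 0 1 ∪ {x | IsMajorStrip K4g G S N x}, Good G S N z 1 0)
    · refine ⟨2, by decide, ?_⟩
      have hsub : N 1 \ (S 1 2 ∩ N 1) ⊆ (S 1 0 ∩ N 1) ∪ (S 1 3 ∩ N 1) := by
        intro x hx
        obtain ⟨v, hadj, hxv⟩ := hst.N_sub 1 hx.1
        fin_cases v
        · exact Or.inl ⟨hxv, hx.1⟩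
        · exact absurd rfl hadj
        · exact absurd ⟨hxv, hx.1⟩ hx.2
        · exact Or.inr ⟨hxv, hx.1⟩
      have hinner : G.IsClique ((S 1 0 ∩ N 1) ∪ (S 1 3 ∩ N 1)) :=
        clique_union (fun x hx y hy hne => hA.1 x hx y hy hne)
          (fun x hx y hy hne => by by_contra hn; exact S13_pair hsf hS hx.1 hy.1 hne hn)
          (fun a ha b hb _ => fork_adj hst 1 0 3 (by decide) (by decide) (by decide)
            ha.1 hb.1 ha.2 hb.2)
      have hcross : ∀ a ∈ OsetK4 G S N 0 1 ∪ {x | IsMajorStrip K4g G S N x},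
          ∀ b ∈ (S 1 0 ∩ N 1) ∪ (S 1 3 ∩ N 1), a ≠ b → G.Adj a b := by
        intro a ha b hb _
        rcases hb with hb | hb
        · exact hA.2 a ha b hb.1 hb.2
        · rcases ha with hO | hM
          · exact O12_good hst hO 1 3 (Or.inr rfl) (by decide) (by decide) b hb.1 hb.2
          · by_contra hn; exact M_S13 hsf hS hM hb.1 hn
      exact Set.Pairwise.mono (Set.union_subset_union_right _ hsub)
        (clique_union hcl12 hinner hcross)
    · have hB : (∀ u ∈ S 1 2 ∩ N 1, ∀ u' ∈ S 1 2 ∩ N 1, u ≠ u' → G.Adj u u') ∧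
          (∀ z ∈ OsetK4 G S N 0 1 ∪ {x | IsMajorStrip K4g G S N x}, Good G S N z 1 2) := by
        by_contra hB
        exact notBothBad1 hsf hS hcl12 hA hB
      refine ⟨0, by decide, ?_⟩
      have hsub : N 1 \ (S 1 0 ∩ N 1) ⊆ (S 1 2 ∩ N 1) ∪ (S 1 3 ∩ N 1) := by
        intro x hx
        obtain ⟨v, hadj, hxv⟩ := hst.N_sub 1 hx.1
        fin_cases v
        · exact absurd ⟨hxv, hx.1⟩ hx.2
        · exact absurd rfl hadj
        · exact Or.inl ⟨hxv, hx.1⟩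
        · exact Or.inr ⟨hxv, hx.1⟩
      have hinner : G.IsClique ((S 1 2 ∩ N 1) ∪ (S 1 3 ∩ N 1)) :=
        clique_union (fun x hx y hy hne => hB.1 x hx y hy hne)
          (fun x hx y hy hne => by by_contra hn; exact S13_pair hsf hS hx.1 hy.1 hne hn)
          (fun a ha b hb _ => fork_adj hst 1 2 3 (by decide) (by decide) (by decide)
            ha.1 hb.1 ha.2 hb.2)
      have hcross : ∀ a ∈ OsetK4 G S N 0 1 ∪ {x | IsMajorStrip K4g G S N x},
          ∀ b ∈ (S 1 2 ∩ N 1) ∪ (S 1 3 ∩ N 1), a ≠ b → G.Adj a b := by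
        intro a ha b hb _
        rcases hb with hb | hb
        · exact hB.2 a ha b hb.1 hb.2
        · rcases ha with hO | hM
          · exact O12_good hst hO 1 3 (Or.inr rfl) (by decide) (by decide) b hb.1 hb.2
          · by_contra hn; exact M_S13 hsf hS hM hb.1 hn
      exact Set.Pairwise.mono (Set.union_subset_union_right _ hsub)
        (clique_union hcl12 hinner hcross)

end Paper
end

section
/- Let G be a square-free Berge graph, J a 3-connected graph, and (S,N) a J-strip system in G. Then for every edge uv of J there exists a triad {t,t',t''} of G with t∈S_uv and t',t''∈V(S,N)∖(S_uv∪N_u∪N_v). -/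
open SimpleGraph

namespace Paper

variable {V : Type*} {α : Type*}

section AuxLemmas

private lemma list_head_getElem {β : Type*} {l : List β} {a : β} (h : l.head? = some a)
    (h0 : 0 < l.length) : l[0] = a := by
  rw [List.head?_eq_getElem?, List.getElem?_eq_getElem h0] at h
  exact Option.some_inj.mp h

private lemma list_getLast_getElem {β : Type*} {l : List β} {b : β} (h : l.getLast? = some b)
    (h0 : 0 < l.length) : l[l.length - 1] = b := by
  rw [List.getLast?_eq_getElem?, List.getElem?_eq_getElem (by omega)] at h
  exact Option.some_inj.mp h

private lemma cyc4_adj : ∀ i j : Fin 4, (cycleGraph 4).Adj i j ↔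
    ((i.val, j.val) ∈ [(0,1),(1,0),(1,2),(2,1),(2,3),(3,2),(3,0),(0,3)]) := by decide

private lemma square_false {V : Type*} {G : SimpleGraph V} (hsf : SquareFree G) {a b c d : V}
    (hab : G.Adj a b) (hbc : G.Adj b c) (hcd : G.Adj c d) (hda : G.Adj d a)
    (hac : ¬ G.Adj a c) (hbd : ¬ G.Adj b d) (hneac : a ≠ c) (hnebd : b ≠ d) : False := by
  have h1 : a ≠ b := hab.ne
  have h2 : b ≠ c := hbc.ne
  have h3 : c ≠ d := hcd.ne
  have h4 : d ≠ a := hda.ne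
  have hca : ¬ G.Adj c a := fun h => hac h.symm
  have hdb : ¬ G.Adj d b := fun h => hbd h.symm
  apply hsf
  refine ⟨⟨⟨![a,b,c,d], ?_⟩, @fun i j => ?_⟩⟩
  · intro i j hij
    fin_cases i <;> fin_cases j <;> simp_all <;> tauto
  · rw [cyc4_adj]
    fin_cases i <;> fin_cases j <;>
      simp [hab, hbc, hcd, hda, hab.symm, hbc.symm, hcd.symm, hda.symm,
        hac, hbd, hca, hdb, Function.Embedding.coeFn_mk] <;> (dsimp only [DFunLike.coe]; simp [hab, hbc, hcd, hda, hab.symm, hbc.symm, hcd.symm, hda.symm, hac, hbd, hca, hdb])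

end AuxLemmas

section Aux2

private lemma tri_parity {α : Type*} {J : SimpleGraph α} {a b c : α}
    (hab : J.Adj a b) (hbc : J.Adj b c) (hca : J.Adj c a)
    (f : Sym2 α → ℕ)
    (hpar : ∀ (u : α) (cyc : J.Walk u u), cyc.IsCycle →
      ((cyc.edges.map f).sum % 2 = cyc.length % 2)) :
    (f s(a,b) + f s(b,c) + f s(c,a)) % 2 = 1 := by
  have hne_ab : a ≠ b := hab.ne
  have hne_bc : b ≠ c := hbc.ne
  have hne_ca : c ≠ a := hca.ne
  have hcyc : (Walk.cons hab (Walk.cons hbc (Walk.cons hca Walk.nil))).IsCycle := by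
    rw [Walk.isCycle_def]
    refine ⟨?_, by simp, ?_⟩
    · rw [Walk.isTrail_def]
      simp [Sym2.eq_iff]
      tauto
    · have hba : b ≠ a := fun h => hne_ab h.symm
      simp [hne_bc, hne_ca, hba]
  have := hpar a _ hcyc
  simp at this
  omega

private lemma deg3 {α : Type*} [Fintype α] {J : SimpleGraph α} (hJ : ThreeConnected J)
    {z r s : α} (hzr : z ≠ r) (hzs : z ≠ s)
    (h : ∀ y, J.Adj z y → y = r ∨ y = s) : False := by
  letI := Classical.decEq α
  obtain ⟨hcard, hconn⟩ := hJ
  obtain ⟨q, hq⟩ : ∃ q, q ∉ ({z, r, s} : Finset α) := by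
    by_contra hq
    push_neg at hq
    have huniv : (Finset.univ : Finset α) ⊆ {z, r, s} := fun y _ => hq y
    have h3 : ({z, r, s} : Finset α).card ≤ 3 :=
      le_trans (Finset.card_insert_le _ _)
        (by simpa using Nat.add_le_add_right (Finset.card_insert_le r {s}) 1)
    have := Finset.card_le_card huniv
    rw [Finset.card_univ] at this
    omega
  simp only [Finset.mem_insert, Finset.mem_singleton, not_or] at hq
  obtain ⟨hqz, hqr, hqs⟩ := hq
  have hs2 : Nat.card (({r, s} : Set α)) ≤ 2 := by
    rw [Nat.card_coe_set_eq]
    exact le_trans (Set.ncard_insert_le _ _) (by simp)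
  have hc := hconn {r, s} hs2
  have hz' : z ∈ (({r, s} : Set α)ᶜ) := by simp [hzr, hzs]
  have hq' : q ∈ (({r, s} : Set α)ᶜ) := by simp [hqr, hqs]
  obtain ⟨wlk⟩ := hc.preconnected ⟨z, hz'⟩ ⟨q, hq'⟩
  have hnn : ¬ wlk.Nil :=
    Walk.not_nil_of_ne (fun hh => hqz (congrArg Subtype.val hh).symm)
  have hadj := wlk.adj_snd hnn
  have hJadj : J.Adj z (wlk.getVert 1).val := hadj
  have hmem := (wlk.getVert 1).prop
  simp only [Set.mem_compl_iff, Set.mem_insert_iff, Set.mem_singleton_iff, not_or] at hmem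
  rcases h _ hJadj with h' | h'
  · exact hmem.1 h'
  · exact hmem.2 h'

private lemma conn_step {α : Type*} [Fintype α] {J : SimpleGraph α} (hJ : ThreeConnected J)
    {u v p q : α} (hpu : p ≠ u) (hpv : p ≠ v) (hqu : q ≠ u) (hqv : q ≠ v) (hpq : p ≠ q) :
    ∃ r, J.Adj p r ∧ r ≠ u ∧ r ≠ v := by
  have hs2 : Nat.card (({u, v} : Set α)) ≤ 2 := by
    rw [Nat.card_coe_set_eq]
    exact le_trans (Set.ncard_insert_le _ _) (by simp)
  have hc := (hJ.2) {u, v} hs2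
  have hp' : p ∈ (({u, v} : Set α)ᶜ) := by simp [hpu, hpv]
  have hq' : q ∈ (({u, v} : Set α)ᶜ) := by simp [hqu, hqv]
  obtain ⟨wlk⟩ := hc.preconnected ⟨p, hp'⟩ ⟨q, hq'⟩
  have hnn : ¬ wlk.Nil :=
    Walk.not_nil_of_ne (fun hh => hpq (congrArg Subtype.val hh))
  have hadj := wlk.adj_snd hnn
  have hmem := (wlk.getVert 1).prop
  simp only [Set.mem_compl_iff, Set.mem_insert_iff, Set.mem_singleton_iff, not_or] at hmem
  exact ⟨(wlk.getVert 1).val, hadj, hmem.1, hmem.2⟩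

end Aux2

section Aux3

variable {V : Type*} {α : Type*} {G : SimpleGraph V} {J : SimpleGraph α}
  {S : α → α → Set V} {N : α → Set V}

private lemma strip_disj (hSN : IsStripSystem J G S N) {a b c d : α}
    (hab : J.Adj a b) (hcd : J.Adj c d) (hne : s(a,b) ≠ s(c,d)) {z : V}
    (h1 : z ∈ S a b) (h2 : z ∈ S c d) : False :=
  Set.disjoint_left.mp (hSN.S_disj a b c d hab hcd hne) h1 h2

private lemma sym2_ne {a b c d : α} (h1 : ¬(a = c ∧ b = d)) (h2 : ¬(a = d ∧ b = c)) :
    s(a,b) ≠ s(c,d) := fun he => by rcases Sym2.eq_iff.mp he with h | h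
                                    exacts [h1 h, h2 h]

private lemma not_mem_N (hSN : IsStripSystem J G S N) {a b c : α}
    (hab : J.Adj a b) (hca : c ≠ a) (hcb : c ≠ b) {z : V} (hz : z ∈ S a b) : z ∉ N c := by
  intro hN
  obtain ⟨d, hcd, hzd⟩ := hSN.N_sub c hN
  refine strip_disj hSN hab hcd (sym2_ne ?_ ?_) hz hzd
  · rintro ⟨rfl, rfl⟩; exact hca rfl
  · rintro ⟨rfl, rfl⟩; exact hcb rfl

private lemma nodup_getElem_ne {β : Type*} {l : List β} (h : l.Nodup) {i j : ℕ}
    (hi : i < l.length) (hj : j < l.length) (hij : i ≠ j) : l[i] ≠ l[j] := by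
  intro he
  have h2 := (h.get_inj_iff (i := ⟨i, hi⟩) (j := ⟨j, hj⟩)).mp
    (by simpa [List.get_eq_getElem] using he)
  rw [Fin.mk.injEq] at h2
  exact hij h2

private lemma rung_len_pos {u v : α} {p : List V} (h : IsStripRung G S N u v p) :
    0 < p.length := by
  obtain ⟨-, -, ⟨a, hhead, -⟩, -⟩ := h
  cases p
  · simp at hhead
  · simp

private lemma rung_singleton {u v : α} {p : List V} (h : IsStripRung G S N u v p)
    (hlen : p.length = 1) : ∃ a, p = [a] ∧ a ∈ S u v ∧ a ∈ N u ∧ a ∈ N v := by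
  obtain ⟨-, hsub, ⟨a, hhead, haN, -⟩, ⟨b, hlast, hbN, -⟩⟩ := h
  obtain ⟨x, rfl⟩ := List.length_eq_one_iff.mp hlen
  have hxa : x = a := by simpa using hhead
  have hxb : x = b := by simpa using hlast
  exact ⟨x, rfl, hsub x (by simp), by rw [hxa]; exact haN, by rw [hxb]; exact hbN⟩

private lemma rung_two {u v : α} {p : List V} (h : IsStripRung G S N u v p)
    (hlen : p.length = 2) : ∃ a b, G.Adj a b ∧ a ∈ S u v ∧ b ∈ S u v ∧
      a ∈ N u ∧ b ∈ N v ∧ a ∉ N v ∧ b ∉ N u ∧ a ≠ b := by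
  obtain ⟨⟨hchain, hnodup, -⟩, hsub, ⟨a, hhead, haN, hauniq⟩, ⟨b, hlast, hbN, hbuniq⟩⟩ := h
  obtain ⟨x, y, rfl⟩ := List.length_eq_two.mp hlen
  have hxa : x = a := by simpa using hhead
  have hyb : y = b := by simpa using hlast
  have hne : x ≠ y := by simp at hnodup; exact hnodup
  have hadj : G.Adj x y := by exact List.isChain_pair.mp hchain
  refine ⟨x, y, hadj, hsub x (by simp), hsub y (by simp),
    by rw [hxa]; exact haN, by rw [hyb]; exact hbN, ?_, ?_, hne⟩
  · intro hav
    have hxx : x = b := hbuniq x (by simp) hav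
    exact hne (hxx.trans hyb.symm)
  · intro hyu
    have hyy : y = a := hauniq y (by simp) hyu
    exact hne (hxa.trans hyy.symm)

private lemma rung_ends_nonadj {u v : α} {p : List V} (h : IsStripRung G S N u v p)
    (hlen : 3 ≤ p.length) : ∃ a b, ¬ G.Adj a b ∧ a ≠ b ∧ a ∈ S u v ∧ b ∈ S u v ∧
      a ∈ N u ∧ b ∈ N v := by
  obtain ⟨⟨hchain, hnodup, hchord⟩, hsub, ⟨a, hhead, haN, hauniq⟩, ⟨b, hlast, hbN, hbuniq⟩⟩ := h
  have h0 : 0 < p.length := by omega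
  have hl : p.length - 1 < p.length := by omega
  have ha : p[0] = a := list_head_getElem hhead h0
  have hb : p[p.length - 1] = b := list_getLast_getElem hlast h0
  have hne : a ≠ b := by
    have := nodup_getElem_ne hnodup h0 hl (by omega)
    rw [ha, hb] at this
    exact this
  have hnadj : ¬ G.Adj a b := by
    have := hchord ⟨0, h0⟩ ⟨p.length - 1, hl⟩ (by simp; omega)
    simpa [List.get_eq_getElem, ha, hb] using this
  exact ⟨a, b, hnadj, hne, hsub a (ha ▸ List.getElem_mem h0),
    hsub b (hb ▸ List.getElem_mem hl), haN, hbN⟩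

private lemma rung_interior {u v : α} {p : List V} (h : IsStripRung G S N u v p)
    (hlen : 3 ≤ p.length) : ∃ m, m ∈ S u v ∧ m ∉ N u ∧ m ∉ N v := by
  obtain ⟨⟨hchain, hnodup, hchord⟩, hsub, ⟨a, hhead, haN, hauniq⟩, ⟨b, hlast, hbN, hbuniq⟩⟩ := h
  have h0 : 0 < p.length := by omega
  have h1 : 1 < p.length := by omega
  have hl : p.length - 1 < p.length := by omega
  have ha : p[0] = a := list_head_getElem hhead h0
  have hb : p[p.length - 1] = b := list_getLast_getElem hlast h0
  refine ⟨p[1], hsub _ (List.getElem_mem h1), ?_, ?_⟩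
  · intro hNu
    have heq : p[1] = a := hauniq _ (List.getElem_mem h1) hNu
    exact nodup_getElem_ne hnodup h1 h0 (by omega) (heq.trans ha.symm)
  · intro hNv
    have heq : p[1] = b := hbuniq _ (List.getElem_mem h1) hNv
    exact nodup_getElem_ne hnodup h1 hl (by omega) (heq.trans hb.symm)

private lemma rung_all_Nu {u v : α} {p : List V} (h : IsStripRung G S N u v p)
    (hall : ∀ z ∈ p, z ∈ N u) : p.length = 1 := by
  have hpos := rung_len_pos h
  obtain ⟨⟨hchain, hnodup, hchord⟩, hsub, ⟨a, hhead, haN, hauniq⟩, -⟩ := h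
  by_contra hne
  have h1 : 1 < p.length := by omega
  have h0 : 0 < p.length := by omega
  have ha : p[0] = a := list_head_getElem hhead h0
  have heq : p[1] = a := hauniq _ (List.getElem_mem h1) (hall _ (List.getElem_mem h1))
  exact nodup_getElem_ne hnodup h1 h0 (by omega) (heq.trans ha.symm)

private lemma rung_all_Nv {u v : α} {p : List V} (h : IsStripRung G S N u v p)
    (hall : ∀ z ∈ p, z ∈ N v) : p.length = 1 := by
  have hpos := rung_len_pos h
  obtain ⟨⟨hchain, hnodup, hchord⟩, hsub, -, ⟨b, hlast, hbN, hbuniq⟩⟩ := h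
  by_contra hne
  have h1 : 1 < p.length := by omega
  have h0 : 0 < p.length := by omega
  have hl : p.length - 1 < p.length := by omega
  have hb : p[p.length - 1] = b := list_getLast_getElem hlast h0
  have heq : p[0] = b := hbuniq _ (List.getElem_mem h0) (hall _ (List.getElem_mem h0))
  exact nodup_getElem_ne hnodup h0 hl (by omega) (heq.trans hb.symm)

private lemma trivial_strip (hSN : IsStripSystem J G S N) {u v : α} (huv : J.Adj u v)
    (h : S u v ⊆ N u) : ∀ z ∈ S u v, z ∈ N u ∧ z ∈ N v := by
  intro z hz
  obtain ⟨p, hp, hzp⟩ := hSN.rung_cover u v huv z hz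
  have h1 : p.length = 1 := rung_all_Nu hp (fun y hy => h (hp.2.1 y hy))
  obtain ⟨a, rfl, haS, haNu, haNv⟩ := rung_singleton hp h1
  simp at hzp
  subst hzp
  exact ⟨haNu, haNv⟩

private lemma nontriv_rung (hSN : IsStripSystem J G S N) {u v : α} (huv : J.Adj u v)
    {z : V} (hz : z ∈ S u v) (hzN : z ∉ N u) :
    ∃ p, IsStripRung G S N u v p ∧ 2 ≤ p.length := by
  obtain ⟨p, hp, hzp⟩ := hSN.rung_cover u v huv z hz
  refine ⟨p, hp, ?_⟩
  have hpos := rung_len_pos hp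
  by_contra hlt
  have h1 : p.length = 1 := by omega
  obtain ⟨a, rfl, -, haNu, -⟩ := rung_singleton hp h1
  simp at hzp
  subst hzp
  exact hzN haNu

end Aux3

section Aux4

variable {V : Type*} {α : Type*} {G : SimpleGraph V} {J : SimpleGraph α}
  {S : α → α → Set V} {N : α → Set V}

private lemma choice_nonempty (hSN : IsStripSystem J G S N) {R : Sym2 α → List V}
    (hR : IsChoiceOfRungs J G S N R) {u v : α} (huv : J.Adj u v) : ∃ z, z ∈ S u v := by
  rcases hR u v huv with h | h
  · have h0 := rung_len_pos h
    exact ⟨_, h.2.1 _ (List.getElem_mem h0)⟩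
  · have h0 := rung_len_pos h
    exact ⟨(R s(u,v))[0], by rw [hSN.S_symm u v]; exact h.2.1 _ (List.getElem_mem h0)⟩

private lemma choice_len_one (hSN : IsStripSystem J G S N) {R : Sym2 α → List V}
    (hR : IsChoiceOfRungs J G S N R) {u v : α} (huv : J.Adj u v) (h : S u v ⊆ N u) :
    (R s(u,v)).length = 1 := by
  rcases hR u v huv with hp | hp
  · exact rung_all_Nu hp (fun y hy => h (hp.2.1 y hy))
  · exact rung_all_Nv hp (fun y hy => h (by rw [hSN.S_symm u v]; exact hp.2.1 y hy))

private lemma choice_two (hSN : IsStripSystem J G S N) {R : Sym2 α → List V}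
    (hR : IsChoiceOfRungs J G S N R) {u v : α} (huv : J.Adj u v)
    (hlen : (R s(u,v)).length = 2) :
    ∃ a b, G.Adj a b ∧ a ∈ S u v ∧ b ∈ S u v ∧ a ∈ N u ∧ b ∈ N v ∧ a ∉ N v ∧ b ∉ N u := by
  rcases hR u v huv with hp | hp
  · obtain ⟨a, b, h1, h2, h3, h4, h5, h6, h7, -⟩ := rung_two hp hlen
    exact ⟨a, b, h1, h2, h3, h4, h5, h6, h7⟩
  · obtain ⟨a, b, h1, h2, h3, h4, h5, h6, h7, -⟩ := rung_two hp hlen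
    rw [hSN.S_symm v u] at h2 h3
    exact ⟨b, a, h1.symm, h3, h2, h5, h4, h7, h6⟩

private lemma choice_interior (hSN : IsStripSystem J G S N) {R : Sym2 α → List V}
    (hR : IsChoiceOfRungs J G S N R) {u v : α} (huv : J.Adj u v)
    (hlen : 3 ≤ (R s(u,v)).length) :
    ∃ m, m ∈ S u v ∧ m ∉ N u ∧ m ∉ N v := by
  rcases hR u v huv with hp | hp
  · exact rung_interior hp hlen
  · obtain ⟨m, h1, h2, h3⟩ := rung_interior hp hlen
    rw [hSN.S_symm v u] at h1
    exact ⟨m, h1, h3, h2⟩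

end Aux4
/-- triads in a strip system. -/
theorem stripSystem_triad
    {V : Type*} {α : Type*} [Fintype α]
    (G : SimpleGraph V) (hsf : SquareFree G) (hberge : IsBerge G)
    (J : SimpleGraph α) (hJ : ThreeConnected J)
    (S : α → α → Set V) (N : α → Set V) (hSN : IsStripSystem J G S N) :
    ∀ u v, J.Adj u v → ∃ t t' t'' : V, t ∈ S u v ∧
      t' ∈ stripVerts J S \ (S u v ∪ N u ∪ N v) ∧
      t'' ∈ stripVerts J S \ (S u v ∪ N u ∪ N v) ∧
      IsTriad G {t, t', t''} := by
  classical
  intro u v huv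
  by_contra hg
  obtain ⟨R, hR, hpar⟩ := hSN.parity
  have hne_uv : u ≠ v := huv.ne
  -- z in X is nonadjacent to all of S u v
  have anti : ∀ z, z ∈ stripVerts J S → z ∉ S u v → z ∉ N u → z ∉ N v →
      ∀ t ∈ S u v, ¬ G.Adj t z := by
    rintro z ⟨a, b, hab, hzab⟩ hzS hzNu hzNv t ht hadj
    by_cases hau : a = u
    · by_cases hbv : b = v
      · exact hzS (hau ▸ hbv ▸ hzab)
      · have hz' : z ∈ S u b := hau ▸ hzab
        have hab' : J.Adj u b := hau ▸ hab
        exact hzNu ((hSN.fork u v b huv hab' (fun h => hbv h.symm) t ht z hz').mp hadj).2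
    · by_cases hbu : b = u
      · by_cases hav : a = v
        · exact hzS (by rw [hSN.S_symm u v]; exact hav ▸ hbu ▸ hzab)
        · have hz' : z ∈ S u a := by rw [hSN.S_symm u a]; exact hbu ▸ hzab
          have hab' : J.Adj u a := (hbu ▸ hab).symm
          exact hzNu ((hSN.fork u v a huv hab' (fun h => hav h.symm) t ht z hz').mp hadj).2
      · have ht' : t ∈ S v u := by rw [hSN.S_symm v u]; exact ht
        by_cases hav : a = v
        · have hz' : z ∈ S v b := hav ▸ hzab
          have hab' : J.Adj v b := hav ▸ hab
          exact hzNv ((hSN.fork v u b huv.symm hab' (fun h => hbu h.symm) t ht' z hz').mp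
            hadj).2
        · by_cases hbv : b = v
          · have hz' : z ∈ S v a := by rw [hSN.S_symm v a]; exact hbv ▸ hzab
            have hab' : J.Adj v a := (hbv ▸ hab).symm
            exact hzNv ((hSN.fork v u a huv.symm hab' (fun h => hau h.symm) t ht' z
              hz').mp hadj).2
          · exact hSN.far_anti u v a b huv hab (fun h => hau h.symm) (fun h => hbu h.symm)
              (fun h => hav h.symm) (fun h => hbv h.symm) ht hzab hadj
  -- two nonadjacent vertices in X finish the proof
  have hfin : ∀ z z', z ∈ stripVerts J S → z ∉ S u v → z ∉ N u → z ∉ N v →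
      z' ∈ stripVerts J S → z' ∉ S u v → z' ∉ N u → z' ∉ N v →
      z ≠ z' → ¬ G.Adj z z' → False := by
    intro z z' h1 h2 h3 h4 h5 h6 h7 h8 hne hnadj
    obtain ⟨t, ht⟩ := choice_nonempty hSN hR huv
    refine hg ⟨t, z, z', ht, ⟨h1, ?_⟩, ⟨h5, ?_⟩, t, z, z',
      fun h => h2 (h ▸ ht), fun h => h6 (h ▸ ht), hne,
      anti z h1 h2 h3 h4 t ht, anti z' h5 h6 h7 h8 t ht, hnadj, rfl⟩
    · simp only [Set.mem_union, not_or]; exact ⟨⟨h2, h3⟩, h4⟩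
    · simp only [Set.mem_union, not_or]; exact ⟨⟨h6, h7⟩, h8⟩
  -- membership helpers
  have memX : ∀ (a b : α) (z : V), J.Adj a b → a ≠ u → a ≠ v → b ≠ u → b ≠ v → z ∈ S a b →
      z ∈ stripVerts J S ∧ z ∉ S u v ∧ z ∉ N u ∧ z ∉ N v := by
    intro a b z hab hau hav hbu hbv hz
    exact ⟨⟨a, b, hab, hz⟩,
      fun h => strip_disj hSN hab huv
        (sym2_ne (fun hh => hau hh.1) (fun hh => hav hh.1)) hz h,
      not_mem_N hSN hab (Ne.symm hau) (Ne.symm hbu) hz,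
      not_mem_N hSN hab (Ne.symm hav) (Ne.symm hbv) hz⟩
  have memXu : ∀ (b : α) (z : V), J.Adj u b → b ≠ v → z ∈ S u b → z ∉ N u →
      z ∈ stripVerts J S ∧ z ∉ S u v ∧ z ∉ N u ∧ z ∉ N v := by
    intro b z hub hbv hz hzN
    exact ⟨⟨u, b, hub, hz⟩,
      fun h => strip_disj hSN hub huv
        (sym2_ne (fun hh => hbv hh.2) (fun hh => hne_uv hh.1)) hz h,
      hzN, not_mem_N hSN hub (Ne.symm hne_uv) (Ne.symm hbv) hz⟩
  have memXv : ∀ (b : α) (z : V), J.Adj v b → b ≠ u → z ∈ S v b → z ∉ N v →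
      z ∈ stripVerts J S ∧ z ∉ S u v ∧ z ∉ N u ∧ z ∉ N v := by
    intro b z hvb hbu hz hzN
    exact ⟨⟨v, b, hvb, hz⟩,
      fun h => strip_disj hSN hvb huv
        (sym2_ne (fun hh => hne_uv hh.1.symm) (fun hh => hbu hh.2)) hz h,
      not_mem_N hSN hvb hne_uv (Ne.symm hbu) hz, hzN⟩
  -- fork-based nonadjacency
  have fork' : ∀ (p b c : α) (z z' : V), J.Adj p b → J.Adj p c → b ≠ c →
      z ∈ S p b → z' ∈ S p c → (z ∉ N p ∨ z' ∉ N p) → ¬ G.Adj z z' := by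
    intro p b c z z' hpb hpc hbc hz hz' hor hadj
    rcases (hSN.fork p b c hpb hpc hbc z hz z' hz').mp hadj with ⟨h1, h2⟩
    rcases hor with h | h
    exacts [h h1, h h2]
  have neS : ∀ (a b c d : α) (z z' : V), J.Adj a b → J.Adj c d →
      ¬(a = c ∧ b = d) → ¬(a = d ∧ b = c) → z ∈ S a b → z' ∈ S c d → z ≠ z' := by
    intro a b c d z z' h1 h2 hn1 hn2 hz hz' he
    exact strip_disj hSN h1 h2 (sym2_ne hn1 hn2) hz (he ▸ hz')
  -- generic square: triangle p q r, a 2-vertex rung h-l in S q r,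
  -- z₁ in S p q ∩ N p ∩ N q, z₂ in S r p ∩ N r ∩ N p
  have squareGen : ∀ (p q r : α) (z₁ h l z₂ : V), J.Adj p q → J.Adj q r → J.Adj r p →
      z₁ ∈ S p q → z₁ ∈ N p → z₁ ∈ N q →
      h ∈ S q r → h ∈ N q → h ∉ N r → l ∈ S q r → l ∈ N r → l ∉ N q → G.Adj h l →
      z₂ ∈ S r p → z₂ ∈ N r → z₂ ∈ N p → False := by
    intro p q r z₁ hh ll z₂ hpq hqr hrp hz₁S hz₁p hz₁q hhS hhq hhr hlS hlr hlq hadj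
      hz₂S hz₂r hz₂p
    have hz₁S' : z₁ ∈ S q p := by rw [hSN.S_symm q p]; exact hz₁S
    have hlS' : ll ∈ S r q := by rw [hSN.S_symm r q]; exact hlS
    have hhS' : hh ∈ S r q := by rw [hSN.S_symm r q]; exact hhS
    have hz₂S' : z₂ ∈ S p r := by rw [hSN.S_symm p r]; exact hz₂S
    have e1 : G.Adj z₁ hh :=
      (hSN.fork q p r hpq.symm hqr hrp.ne' z₁ hz₁S' hh hhS).mpr ⟨hz₁q, hhq⟩
    have e2 : G.Adj ll z₂ :=
      (hSN.fork r q p hqr.symm hrp hpq.ne' ll hlS' z₂ hz₂S).mpr ⟨hlr, hz₂r⟩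
    have e3 : G.Adj z₂ z₁ :=
      (hSN.fork p r q hrp.symm hpq hqr.ne' z₂ hz₂S' z₁ hz₁S).mpr ⟨hz₂p, hz₁p⟩
    have n1 : ¬ G.Adj z₁ ll := fun hadj' =>
      hlq ((hSN.fork q p r hpq.symm hqr hrp.ne' z₁ hz₁S' ll hlS).mp hadj').2
    have n2 : ¬ G.Adj hh z₂ := fun hadj' =>
      hhr ((hSN.fork r q p hqr.symm hrp hpq.ne' hh hhS' z₂ hz₂S).mp hadj').1
    have d1 : z₁ ≠ ll := neS p q q r z₁ ll hpq hqr (fun hh' => hpq.ne hh'.1)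
      (fun hh' => hrp.ne' hh'.1) hz₁S hlS
    have d2 : hh ≠ z₂ := neS q r r p hh z₂ hqr hrp (fun hh' => hqr.ne hh'.1)
      (fun hh' => hpq.ne hh'.1.symm) hhS hz₂S
    exact square_false hsf e1 hadj e2 e3 n1 n2 d1 d2
  -- square from two "leaves" b c attached to both w₀ and a
  have squareII : ∀ (w₀ a b c : α) (q₁ q₂ z₂ z₁ : V), J.Adj w₀ b → J.Adj w₀ c →
      J.Adj a b → J.Adj a c → w₀ ≠ a → b ≠ c →
      q₁ ∈ S w₀ b → q₁ ∈ N w₀ → q₁ ∈ N b →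
      q₂ ∈ S w₀ c → q₂ ∈ N w₀ → q₂ ∈ N c →
      z₂ ∈ S a c → z₂ ∈ N a → z₂ ∈ N c →
      z₁ ∈ S a b → z₁ ∈ N a → z₁ ∈ N b → False := by
    intro w₀ a b c q₁ q₂ z₂ z₁ hwb hwc hab hac hwa hbc hq₁S hq₁w hq₁b hq₂S hq₂w hq₂c
      hz₂S hz₂a hz₂c hz₁S hz₁a hz₁b
    have hq₁S' : q₁ ∈ S b w₀ := by rw [hSN.S_symm b w₀]; exact hq₁S
    have hq₂S' : q₂ ∈ S c w₀ := by rw [hSN.S_symm c w₀]; exact hq₂S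
    have hz₂S' : z₂ ∈ S c a := by rw [hSN.S_symm c a]; exact hz₂S
    have hz₁S' : z₁ ∈ S b a := by rw [hSN.S_symm b a]; exact hz₁S
    have e1 : G.Adj q₁ q₂ := (hSN.fork w₀ b c hwb hwc hbc q₁ hq₁S q₂ hq₂S).mpr ⟨hq₁w, hq₂w⟩
    have e2 : G.Adj q₂ z₂ :=
      (hSN.fork c w₀ a hwc.symm hac.symm hwa q₂ hq₂S' z₂ hz₂S').mpr ⟨hq₂c, hz₂c⟩
    have e3 : G.Adj z₂ z₁ :=
      (hSN.fork a c b hac hab (Ne.symm hbc) z₂ hz₂S z₁ hz₁S).mpr ⟨hz₂a, hz₁a⟩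
    have e4 : G.Adj z₁ q₁ :=
      (hSN.fork b a w₀ hab.symm hwb.symm (fun h => hwa h.symm) z₁ hz₁S' q₁ hq₁S').mpr
        ⟨hz₁b, hq₁b⟩
    have n1 : ¬ G.Adj q₁ z₂ :=
      hSN.far_anti w₀ b a c hwb hac hwa hwc.ne hab.ne' hbc hq₁S hz₂S
    have n2 : ¬ G.Adj q₂ z₁ :=
      hSN.far_anti w₀ c a b hwc hab hwa hwb.ne hac.ne' (Ne.symm hbc) hq₂S hz₁S
    have d1 : q₁ ≠ z₂ := neS w₀ b a c q₁ z₂ hwb hac (fun hh => hwa hh.1)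
      (fun hh => hwc.ne hh.1) hq₁S hz₂S
    have d2 : q₂ ≠ z₁ := neS w₀ c a b q₂ z₁ hwc hab (fun hh => hwa hh.1)
      (fun hh => hwb.ne hh.1) hq₂S hz₁S
    exact square_false hsf e1 e2 e3 e4 n1 n2 d1 d2
  -- two vertices outside {u, v}
  obtain ⟨w, hwmem, x, hxmem, hwx_ne⟩ :
      ∃ w ∈ (Finset.univ \ {u, v} : Finset α), ∃ x ∈ (Finset.univ \ {u, v} : Finset α),
        w ≠ x := by
    apply Finset.one_lt_card.mp
    have hsub : ({u, v} : Finset α) ⊆ Finset.univ := Finset.subset_univ _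
    rw [Finset.card_sdiff_of_subset hsub, Finset.card_univ]
    have h2 : ({u, v} : Finset α).card ≤ 2 :=
      le_trans (Finset.card_insert_le _ _) (by simp)
    have h4 := hJ.1
    omega
  obtain ⟨hwu, hwv⟩ : w ≠ u ∧ w ≠ v := by
    have := Finset.mem_sdiff.mp hwmem
    simp only [Finset.mem_insert, Finset.mem_singleton, not_or] at this
    exact this.2
  obtain ⟨hxu, hxv⟩ : x ≠ u ∧ x ≠ v := by
    have := Finset.mem_sdiff.mp hxmem
    simp only [Finset.mem_insert, Finset.mem_singleton, not_or] at this
    exact this.2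
  -- connectivity step off {u, v}
  have hstep2 : ∀ cc, cc ≠ u → cc ≠ v → ∃ rr, J.Adj cc rr ∧ rr ≠ u ∧ rr ≠ v := by
    intro cc hcu hcv
    by_cases hcw : cc = w
    · exact conn_step hJ hcu hcv hxu hxv (by rw [hcw]; exact hwx_ne)
    · exact conn_step hJ hcu hcv hwu hwv hcw
  by_cases hsmall : ∀ y : α, y = u ∨ y = v ∨ y = w ∨ y = x
  · -- Case I : α = {u, v, w, x}, J = K4
    have hJuw : J.Adj u w := by
      by_contra hcon
      refine deg3 hJ (z := u) (r := v) (s := x) hne_uv (Ne.symm hxu) ?_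
      intro y hy
      rcases hsmall y with rfl | rfl | rfl | rfl
      · exact (hy.ne rfl).elim
      · exact Or.inl rfl
      · exact (hcon hy).elim
      · exact Or.inr rfl
    have hJux : J.Adj u x := by
      by_contra hcon
      refine deg3 hJ (z := u) (r := v) (s := w) hne_uv (Ne.symm hwu) ?_
      intro y hy
      rcases hsmall y with rfl | rfl | rfl | rfl
      · exact (hy.ne rfl).elim
      · exact Or.inl rfl
      · exact Or.inr rfl
      · exact (hcon hy).elim
    have hJvw : J.Adj v w := by
      by_contra hcon
      refine deg3 hJ (z := v) (r := u) (s := x) (Ne.symm hne_uv) (Ne.symm hxv) ?_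
      intro y hy
      rcases hsmall y with rfl | rfl | rfl | rfl
      · exact Or.inl rfl
      · exact (hy.ne rfl).elim
      · exact (hcon hy).elim
      · exact Or.inr rfl
    have hJvx : J.Adj v x := by
      by_contra hcon
      refine deg3 hJ (z := v) (r := u) (s := w) (Ne.symm hne_uv) (Ne.symm hwv) ?_
      intro y hy
      rcases hsmall y with rfl | rfl | rfl | rfl
      · exact Or.inl rfl
      · exact (hy.ne rfl).elim
      · exact Or.inr rfl
      · exact (hcon hy).elim
    have hJwx : J.Adj w x := by
      by_contra hcon
      refine deg3 hJ (z := w) (r := u) (s := v) hwu hwv ?_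
      intro y hy
      rcases hsmall y with rfl | rfl | rfl | rfl
      · exact Or.inl rfl
      · exact Or.inr rfl
      · exact (hy.ne rfl).elim
      · exact (hcon hy).elim
    -- core of the K4 case
    have k4core : ∀ w' x', w' ≠ u → w' ≠ v → x' ≠ u → x' ≠ v → w' ≠ x' →
        J.Adj u w' → J.Adj u x' → J.Adj v w' → J.Adj v x' → J.Adj w' x' →
        S u x' ⊆ N u → S v x' ⊆ N v → False := by
      intro w' x' hw'u hw'v hx'u hx'v hw'x' hJuw' hJux' hJvw' hJvx' hJw'x' hux' hvx'
      have hTux : ∀ z ∈ S u x', z ∈ N u ∧ z ∈ N x' := trivial_strip hSN hJux' hux'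
      by_cases hwx' : S w' x' ⊆ N w'
      · have hTwx : ∀ z ∈ S w' x', z ∈ N w' ∧ z ∈ N x' := trivial_strip hSN hJw'x' hwx'
        have l1 : (R s(w', x')).length = 1 := choice_len_one hSN hR hJw'x' hwx'
        have l2' : (R s(x', u)).length = 1 := by
          rw [Sym2.eq_swap]; exact choice_len_one hSN hR hJux' hux'
        have hp3 : ((R s(u,w')).length - 1 + ((R s(w',x')).length - 1)
            + ((R s(x',u)).length - 1)) % 2 = 1 :=
          tri_parity hJuw' hJw'x' hJux'.symm (fun e => (R e).length - 1) hpar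
        rw [l1, l2'] at hp3
        by_cases h3p : 3 ≤ (R s(u, w')).length
        · obtain ⟨m, hmS, hmNu, hmNw⟩ := choice_interior hSN hR hJuw' h3p
          obtain ⟨z₃, hz₃⟩ := choice_nonempty hSN hR hJw'x'
          have hmS' : m ∈ S w' u := by rw [hSN.S_symm w' u]; exact hmS
          have hX1 := memXu w' m hJuw' hw'v hmS hmNu
          have hX2 := memX w' x' z₃ hJw'x' hw'u hw'v hx'u hx'v hz₃
          exact hfin m z₃ hX1.1 hX1.2.1 hX1.2.2.1 hX1.2.2.2
            hX2.1 hX2.2.1 hX2.2.2.1 hX2.2.2.2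
            (neS u w' w' x' m z₃ hJuw' hJw'x' (fun hh => hw'u hh.1.symm)
              (fun hh => hx'u hh.1.symm) hmS hz₃)
            (fork' w' u x' m z₃ hJuw'.symm hJw'x' (Ne.symm hx'u) hmS' hz₃ (Or.inl hmNw))
        · have h2p : (R s(u, w')).length = 2 := by omega
          obtain ⟨h₁, l₁, hadj₁, hS₁, hS₂, hN₁, hN₂, hn₁, hn₂⟩ := choice_two hSN hR hJuw' h2p
          obtain ⟨z₃, hz₃⟩ := choice_nonempty hSN hR hJw'x'
          obtain ⟨z₀, hz₀⟩ := choice_nonempty hSN hR hJux'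
          have hz₃' := hTwx z₃ hz₃
          have hz₀' := hTux z₀ hz₀
          have hz₃S : z₃ ∈ S x' w' := by rw [hSN.S_symm x' w']; exact hz₃
          have hS₁' : h₁ ∈ S w' u := by rw [hSN.S_symm w' u]; exact hS₁
          have hS₂' : l₁ ∈ S w' u := by rw [hSN.S_symm w' u]; exact hS₂
          exact squareGen x' w' u z₃ l₁ h₁ z₀ hJw'x'.symm hJuw'.symm hJux'
            hz₃S hz₃'.2 hz₃'.1 hS₂' hN₂ hn₂ hS₁' hN₁ hn₁ hadj₁.symm hz₀ hz₀'.1 hz₀'.2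
      · obtain ⟨z₄, hz₄S, hz₄N⟩ := Set.not_subset.mp hwx'
        obtain ⟨p, hp, h2p⟩ := nontriv_rung hSN hJw'x' hz₄S hz₄N
        by_cases h3p : 3 ≤ p.length
        · obtain ⟨aa, bb, hnadj, hne, haS, hbS, -, -⟩ := rung_ends_nonadj hp h3p
          have hXa := memX w' x' aa hJw'x' hw'u hw'v hx'u hx'v haS
          have hXb := memX w' x' bb hJw'x' hw'u hw'v hx'u hx'v hbS
          exact hfin aa bb hXa.1 hXa.2.1 hXa.2.2.1 hXa.2.2.2
            hXb.1 hXb.2.1 hXb.2.2.1 hXb.2.2.2 hne hnadj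
        · have h2 : p.length = 2 := by omega
          obtain ⟨c₁, c₂, hadjc, hc₁S, hc₂S, hc₁N, hc₂N, hc₁n, hc₂n, -⟩ := rung_two hp h2
          by_cases huw2 : S u w' ⊆ N u
          · by_cases hvw2 : S v w' ⊆ N v
            · have hTuw := trivial_strip hSN hJuw' huw2
              obtain ⟨z₁, hz₁⟩ := choice_nonempty hSN hR hJuw'
              obtain ⟨z₀, hz₀⟩ := choice_nonempty hSN hR hJux'
              have hz₁' := hTuw z₁ hz₁
              have hz₀' := hTux z₀ hz₀
              have hz₀S : z₀ ∈ S x' u := by rw [hSN.S_symm x' u]; exact hz₀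
              exact squareGen u w' x' z₁ c₁ c₂ z₀ hJuw' hJw'x' hJux'.symm
                hz₁ hz₁'.1 hz₁'.2 hc₁S hc₁N hc₁n hc₂S hc₂N hc₂n hadjc hz₀S hz₀'.2 hz₀'.1
            · obtain ⟨z₅, hz₅S, hz₅N⟩ := Set.not_subset.mp hvw2
              have hX1 := memXv w' z₅ hJvw' hw'u hz₅S hz₅N
              have hX2 := memX w' x' c₂ hJw'x' hw'u hw'v hx'u hx'v hc₂S
              have hz₅S' : z₅ ∈ S w' v := by rw [hSN.S_symm w' v]; exact hz₅S
              exact hfin z₅ c₂ hX1.1 hX1.2.1 hX1.2.2.1 hX1.2.2.2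
                hX2.1 hX2.2.1 hX2.2.2.1 hX2.2.2.2
                (neS v w' w' x' z₅ c₂ hJvw' hJw'x' (fun hh => hw'v hh.1.symm)
                  (fun hh => hx'v hh.1.symm) hz₅S hc₂S)
                (fork' w' v x' z₅ c₂ hJvw'.symm hJw'x' (Ne.symm hx'v) hz₅S' hc₂S
                  (Or.inr hc₂n))
          · obtain ⟨z₅, hz₅S, hz₅N⟩ := Set.not_subset.mp huw2
            have hX1 := memXu w' z₅ hJuw' hw'v hz₅S hz₅N
            have hX2 := memX w' x' c₂ hJw'x' hw'u hw'v hx'u hx'v hc₂S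
            have hz₅S' : z₅ ∈ S w' u := by rw [hSN.S_symm w' u]; exact hz₅S
            exact hfin z₅ c₂ hX1.1 hX1.2.1 hX1.2.2.1 hX1.2.2.2
              hX2.1 hX2.2.1 hX2.2.2.1 hX2.2.2.2
              (neS u w' w' x' z₅ c₂ hJuw' hJw'x' (fun hh => hw'u hh.1.symm)
                (fun hh => hx'u hh.1.symm) hz₅S hc₂S)
              (fork' w' u x' z₅ c₂ hJuw'.symm hJw'x' (Ne.symm hx'u) hz₅S' hc₂S
                (Or.inr hc₂n))
    -- dispatch
    by_cases hux0 : S u x ⊆ N u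
    · by_cases hvx0 : S v x ⊆ N v
      · exact k4core w x hwu hwv hxu hxv hwx_ne hJuw hJux hJvw hJvx hJwx hux0 hvx0
      · obtain ⟨z, hzS, hzN⟩ := Set.not_subset.mp hvx0
        by_cases huw0 : S u w ⊆ N u
        · by_cases hvw0 : S v w ⊆ N v
          · exact k4core x w hxu hxv hwu hwv (Ne.symm hwx_ne) hJux hJuw hJvx hJvw
              hJwx.symm huw0 hvw0
          · obtain ⟨z', hz'S, hz'N⟩ := Set.not_subset.mp hvw0
            have hX1 := memXv x z hJvx hxu hzS hzN
            have hX2 := memXv w z' hJvw hwu hz'S hz'N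
            exact hfin z z' hX1.1 hX1.2.1 hX1.2.2.1 hX1.2.2.2
              hX2.1 hX2.2.1 hX2.2.2.1 hX2.2.2.2
              (neS v x v w z z' hJvx hJvw (fun hh => hwx_ne hh.2.symm)
                (fun hh => hwv hh.1.symm) hzS hz'S)
              (fork' v x w z z' hJvx hJvw (Ne.symm hwx_ne) hzS hz'S (Or.inl hzN))
        · obtain ⟨z', hz'S, hz'N⟩ := Set.not_subset.mp huw0
          have hX1 := memXv x z hJvx hxu hzS hzN
          have hX2 := memXu w z' hJuw hwv hz'S hz'N
          exact hfin z z' hX1.1 hX1.2.1 hX1.2.2.1 hX1.2.2.2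
            hX2.1 hX2.2.1 hX2.2.2.1 hX2.2.2.2
            (neS v x u w z z' hJvx hJuw (fun hh => hne_uv hh.1.symm)
              (fun hh => hwv hh.1.symm) hzS hz'S)
            (hSN.far_anti v x u w hJvx hJuw (Ne.symm hne_uv) (Ne.symm hwv)
              hxu (Ne.symm hwx_ne) hzS hz'S)
    · obtain ⟨z, hzS, hzN⟩ := Set.not_subset.mp hux0
      by_cases huw0 : S u w ⊆ N u
      · by_cases hvw0 : S v w ⊆ N v
        · exact k4core x w hxu hxv hwu hwv (Ne.symm hwx_ne) hJux hJuw hJvx hJvw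
            hJwx.symm huw0 hvw0
        · obtain ⟨z', hz'S, hz'N⟩ := Set.not_subset.mp hvw0
          have hX1 := memXu x z hJux hxv hzS hzN
          have hX2 := memXv w z' hJvw hwu hz'S hz'N
          exact hfin z z' hX1.1 hX1.2.1 hX1.2.2.1 hX1.2.2.2
            hX2.1 hX2.2.1 hX2.2.2.1 hX2.2.2.2
            (neS u x v w z z' hJux hJvw (fun hh => hne_uv hh.1)
              (fun hh => hwu hh.1.symm) hzS hz'S)
            (hSN.far_anti u x v w hJux hJvw hne_uv (Ne.symm hwu)
              hxv (Ne.symm hwx_ne) hzS hz'S)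
      · obtain ⟨z', hz'S, hz'N⟩ := Set.not_subset.mp huw0
        have hX1 := memXu x z hJux hxv hzS hzN
        have hX2 := memXu w z' hJuw hwv hz'S hz'N
        exact hfin z z' hX1.1 hX1.2.1 hX1.2.2.1 hX1.2.2.2
          hX2.1 hX2.2.1 hX2.2.2.1 hX2.2.2.2
          (neS u x u w z z' hJux hJuw (fun hh => hwx_ne hh.2.symm)
            (fun hh => hwu hh.1.symm) hzS hz'S)
          (fork' u x w z z' hJux hJuw (Ne.symm hwx_ne) hzS hz'S (Or.inl hzN))
  · -- Case II : at least five vertices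
    obtain ⟨c₀, hc₀u, hc₀v, hc₀w, hc₀x⟩ : ∃ c₀, c₀ ≠ u ∧ c₀ ≠ v ∧ c₀ ≠ w ∧ c₀ ≠ x := by
      push_neg at hsmall
      obtain ⟨y, hy⟩ := hsmall
      exact ⟨y, hy.1, hy.2.1, hy.2.2.1, hy.2.2.2⟩
    obtain ⟨r, hJwr, hru, hrv⟩ := hstep2 w hwu hwv
    by_cases hT : ∀ a b, J.Adj a b → a ≠ u → a ≠ v → b ≠ u → b ≠ v → S a b ⊆ N a
    · -- all strips away from u, v are trivial
      have hT2 : ∀ a b, J.Adj a b → a ≠ u → a ≠ v → b ≠ u → b ≠ v →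
          ∀ z ∈ S a b, z ∈ N a ∧ z ∈ N b := fun a b hab h1 h2 h3 h4 =>
        trivial_strip hSN hab (hT a b hab h1 h2 h3 h4)
      obtain ⟨a₀, hclean⟩ : ∃ a₀, ∀ q, q ≠ u → q ≠ v → q ≠ a₀ →
          (∀ z ∈ S u q, z ∈ N u) ∧ (∀ z ∈ S v q, z ∈ N v) := by
        by_cases hex : ∃ p', p' ≠ u ∧ p' ≠ v ∧
            ((∃ z ∈ S u p', z ∉ N u) ∨ (∃ z ∈ S v p', z ∉ N v))
        · obtain ⟨a₀, ha₀u, ha₀v, hwit⟩ := hex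
          refine ⟨a₀, fun q hqu hqv hqa => ⟨?_, ?_⟩⟩
          · intro z hz
            by_contra hzN
            have hJuq : J.Adj u q := by
              by_contra hne; rw [hSN.S_empty u q hne] at hz; exact hz
            have hX1 := memXu q z hJuq hqv hz hzN
            rcases hwit with ⟨z₀, hz₀S, hz₀N⟩ | ⟨z₀, hz₀S, hz₀N⟩
            · have hJua : J.Adj u a₀ := by
                by_contra hne; rw [hSN.S_empty u a₀ hne] at hz₀S; exact hz₀S
              have hX2 := memXu a₀ z₀ hJua ha₀v hz₀S hz₀N
              exact hfin z z₀ hX1.1 hX1.2.1 hX1.2.2.1 hX1.2.2.2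
                hX2.1 hX2.2.1 hX2.2.2.1 hX2.2.2.2
                (neS u q u a₀ z z₀ hJuq hJua (fun hh => hqa hh.2)
                  (fun hh => hqu hh.2) hz hz₀S)
                (fork' u q a₀ z z₀ hJuq hJua hqa hz hz₀S (Or.inl hzN))
            · have hJva : J.Adj v a₀ := by
                by_contra hne; rw [hSN.S_empty v a₀ hne] at hz₀S; exact hz₀S
              have hX2 := memXv a₀ z₀ hJva ha₀u hz₀S hz₀N
              exact hfin z z₀ hX1.1 hX1.2.1 hX1.2.2.1 hX1.2.2.2
                hX2.1 hX2.2.1 hX2.2.2.1 hX2.2.2.2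
                (neS u q v a₀ z z₀ hJuq hJva (fun hh => hne_uv hh.1)
                  (fun hh => hqv hh.2) hz hz₀S)
                (hSN.far_anti u q v a₀ hJuq hJva hne_uv (Ne.symm ha₀u) hqv hqa hz hz₀S)
          · intro z hz
            by_contra hzN
            have hJvq : J.Adj v q := by
              by_contra hne; rw [hSN.S_empty v q hne] at hz; exact hz
            have hX1 := memXv q z hJvq hqu hz hzN
            rcases hwit with ⟨z₀, hz₀S, hz₀N⟩ | ⟨z₀, hz₀S, hz₀N⟩
            · have hJua : J.Adj u a₀ := by
                by_contra hne; rw [hSN.S_empty u a₀ hne] at hz₀S; exact hz₀S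
              have hX2 := memXu a₀ z₀ hJua ha₀v hz₀S hz₀N
              exact hfin z z₀ hX1.1 hX1.2.1 hX1.2.2.1 hX1.2.2.2
                hX2.1 hX2.2.1 hX2.2.2.1 hX2.2.2.2
                (neS v q u a₀ z z₀ hJvq hJua (fun hh => hne_uv hh.1.symm)
                  (fun hh => hqu hh.2) hz hz₀S)
                (hSN.far_anti v q u a₀ hJvq hJua (Ne.symm hne_uv) (Ne.symm ha₀v)
                  hqu hqa hz hz₀S)
            · have hJva : J.Adj v a₀ := by
                by_contra hne; rw [hSN.S_empty v a₀ hne] at hz₀S; exact hz₀S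
              have hX2 := memXv a₀ z₀ hJva ha₀u hz₀S hz₀N
              exact hfin z z₀ hX1.1 hX1.2.1 hX1.2.2.1 hX1.2.2.2
                hX2.1 hX2.2.1 hX2.2.2.1 hX2.2.2.2
                (neS v q v a₀ z z₀ hJvq hJva (fun hh => hqa hh.2)
                  (fun hh => hqv hh.2) hz hz₀S)
                (fork' v q a₀ z z₀ hJvq hJva hqa hz hz₀S (Or.inl hzN))
        · refine ⟨u, fun q hqu hqv _ => ⟨?_, ?_⟩⟩
          · intro z hz
            by_contra hzN
            exact hex ⟨q, hqu, hqv, Or.inl ⟨z, hz, hzN⟩⟩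
          · intro z hz
            by_contra hzN
            exact hex ⟨q, hqu, hqv, Or.inr ⟨z, hz, hzN⟩⟩
      -- main continuation: center a with leaf b' (≠ a₀) and sibling c'
      have main2 : ∀ a b' c', J.Adj a b' → J.Adj a c' → b' ≠ c' →
          a ≠ u → a ≠ v → b' ≠ u → b' ≠ v → c' ≠ u → c' ≠ v →
          J.Adj b' u → J.Adj b' v → b' ≠ a₀ → (a₀ = b' ∨ a₀ = c') → False := by
        intro a b' c' hab' hac' hbc' hau hav hbu hbv hcu hcv hJbu hJbv hba₀ ha₀mem
        by_cases hd : ∃ d, J.Adj a d ∧ d ≠ u ∧ d ≠ v ∧ d ≠ b' ∧ d ≠ c'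
        · obtain ⟨d, hJad, hdu, hdv, hdb, hdc⟩ := hd
          have hdleaf : ∀ e, J.Adj d e → e ≠ u → e ≠ v → e = a := by
            intro e hde heu hev
            by_contra hea
            obtain ⟨z1, hz1⟩ := choice_nonempty hSN hR hde
            by_cases heb : e = b'
            · obtain ⟨z2, hz2⟩ := choice_nonempty hSN hR hac'
              have hX1 := memX d e z1 hde hdu hdv heu hev hz1
              have hX2 := memX a c' z2 hac' hau hav hcu hcv hz2
              exact hfin z1 z2 hX1.1 hX1.2.1 hX1.2.2.1 hX1.2.2.2
                hX2.1 hX2.2.1 hX2.2.2.1 hX2.2.2.2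
                (neS d e a c' z1 z2 hde hac' (fun hh => hJad.ne' hh.1)
                  (fun hh => hdc hh.1) hz1 hz2)
                (hSN.far_anti d e a c' hde hac' hJad.ne' hdc hea
                  (by rw [heb]; exact hbc') hz1 hz2)
            · obtain ⟨z2, hz2⟩ := choice_nonempty hSN hR hab'
              have hX1 := memX d e z1 hde hdu hdv heu hev hz1
              have hX2 := memX a b' z2 hab' hau hav hbu hbv hz2
              exact hfin z1 z2 hX1.1 hX1.2.1 hX1.2.2.1 hX1.2.2.2
                hX2.1 hX2.2.1 hX2.2.2.1 hX2.2.2.2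
                (neS d e a b' z1 z2 hde hab' (fun hh => hJad.ne' hh.1)
                  (fun hh => hdb hh.1) hz1 hz2)
                (hSN.far_anti d e a b' hde hab' hJad.ne' hdb hea heb hz1 hz2)
          have hJdu : J.Adj d u := by
            by_contra hcon
            refine deg3 hJ (z := d) (r := a) (s := v) hJad.ne' hdv ?_
            intro y hy
            by_cases hyu : y = u
            · exact (hcon (hyu ▸ hy)).elim
            · by_cases hyv : y = v
              · exact Or.inr hyv
              · exact Or.inl (hdleaf y hy hyu hyv)
          have hda₀ : d ≠ a₀ := by
            rcases ha₀mem with h | h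
            · exact fun hh => hdb (hh.trans h)
            · exact fun hh => hdc (hh.trans h)
          obtain ⟨q₁, hq₁⟩ := choice_nonempty hSN hR (hJbu.symm : J.Adj u b')
          obtain ⟨q₂, hq₂⟩ := choice_nonempty hSN hR (hJdu.symm : J.Adj u d)
          obtain ⟨z₂, hz₂⟩ := choice_nonempty hSN hR hJad
          obtain ⟨z₁, hz₁⟩ := choice_nonempty hSN hR hab'
          have hq₁N := trivial_strip hSN hJbu.symm ((hclean b' hbu hbv hba₀).1) q₁ hq₁
          have hq₂N := trivial_strip hSN hJdu.symm ((hclean d hdu hdv hda₀).1) q₂ hq₂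
          have hz₂N := hT2 a d hJad hau hav hdu hdv z₂ hz₂
          have hz₁N := hT2 a b' hab' hau hav hbu hbv z₁ hz₁
          exact squareII u a b' d q₁ q₂ z₂ z₁ hJbu.symm hJdu.symm hab' hJad
            (Ne.symm hau) (Ne.symm hdb) hq₁ hq₁N.1 hq₁N.2
            hq₂ hq₂N.1 hq₂N.2 hz₂ hz₂N.1 hz₂N.2 hz₁ hz₁N.1 hz₁N.2
        · have hnb : ∀ y, J.Adj a y → y = b' ∨ y = c' ∨ y = u ∨ y = v := by
            intro y hy
            by_cases hyu : y = u
            · exact Or.inr (Or.inr (Or.inl hyu))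
            · by_cases hyv : y = v
              · exact Or.inr (Or.inr (Or.inr hyv))
              · by_cases hyb : y = b'
                · exact Or.inl hyb
                · by_cases hyc : y = c'
                  · exact Or.inr (Or.inl hyc)
                  · exact (hd ⟨y, hy, hyu, hyv, hyb, hyc⟩).elim
          by_cases hau' : J.Adj a u
          · have l2 : (R s(a, b')).length = 1 :=
              choice_len_one hSN hR hab' (hT a b' hab' hau hav hbu hbv)
            have l3 : (R s(b', u)).length = 1 := by
              rw [Sym2.eq_swap]
              exact choice_len_one hSN hR hJbu.symm ((hclean b' hbu hbv hba₀).1)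
            have hp3 : ((R s(u,a)).length - 1 + ((R s(a,b')).length - 1)
                + ((R s(b',u)).length - 1)) % 2 = 1 :=
              tri_parity hau'.symm hab' hJbu (fun e => (R e).length - 1) hpar
            rw [l2, l3] at hp3
            by_cases h3p : 3 ≤ (R s(u, a)).length
            · obtain ⟨m, hmS, hmNu, hmNa⟩ := choice_interior hSN hR hau'.symm h3p
              obtain ⟨z₁, hz₁⟩ := choice_nonempty hSN hR hab'
              have hz₁N := hT2 a b' hab' hau hav hbu hbv z₁ hz₁
              have hmS' : m ∈ S a u := by rw [hSN.S_symm a u]; exact hmS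
              have hX1 := memXu a m hau'.symm hav hmS hmNu
              have hX2 := memX a b' z₁ hab' hau hav hbu hbv hz₁
              exact hfin m z₁ hX1.1 hX1.2.1 hX1.2.2.1 hX1.2.2.2
                hX2.1 hX2.2.1 hX2.2.2.1 hX2.2.2.2
                (neS u a a b' m z₁ hau'.symm hab' (fun hh => hau hh.1.symm)
                  (fun hh => hbu hh.1.symm) hmS hz₁)
                (fork' a u b' m z₁ hau' hab' (Ne.symm hbu) hmS' hz₁ (Or.inl hmNa))
            · have h2p : (R s(u, a)).length = 2 := by omega
              obtain ⟨h₁, l₁, hadj₁, hS₁, hS₂, hN₁, hN₂, hn₁, hn₂⟩ :=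
                choice_two hSN hR hau'.symm h2p
              obtain ⟨z₁, hz₁⟩ := choice_nonempty hSN hR hJbu.symm
              obtain ⟨z₂, hz₂⟩ := choice_nonempty hSN hR hab'
              have hz₁N := trivial_strip hSN hJbu.symm ((hclean b' hbu hbv hba₀).1) z₁ hz₁
              have hz₂N := hT2 a b' hab' hau hav hbu hbv z₂ hz₂
              have hz₁S' : z₁ ∈ S b' u := by rw [hSN.S_symm b' u]; exact hz₁
              exact squareGen b' u a z₁ h₁ l₁ z₂ hJbu hau'.symm hab'
                hz₁S' hz₁N.2 hz₁N.1 hS₁ hN₁ hn₁ hS₂ hN₂ hn₂ hadj₁ hz₂ hz₂N.1 hz₂N.2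
          · by_cases hav' : J.Adj a v
            · have l2 : (R s(a, b')).length = 1 :=
                choice_len_one hSN hR hab' (hT a b' hab' hau hav hbu hbv)
              have l3 : (R s(b', v)).length = 1 := by
                rw [Sym2.eq_swap]
                exact choice_len_one hSN hR hJbv.symm ((hclean b' hbu hbv hba₀).2)
              have hp3 : ((R s(v,a)).length - 1 + ((R s(a,b')).length - 1)
                  + ((R s(b',v)).length - 1)) % 2 = 1 :=
                tri_parity hav'.symm hab' hJbv (fun e => (R e).length - 1) hpar
              rw [l2, l3] at hp3
              by_cases h3p : 3 ≤ (R s(v, a)).length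
              · obtain ⟨m, hmS, hmNv, hmNa⟩ := choice_interior hSN hR hav'.symm h3p
                obtain ⟨z₁, hz₁⟩ := choice_nonempty hSN hR hab'
                have hz₁N := hT2 a b' hab' hau hav hbu hbv z₁ hz₁
                have hmS' : m ∈ S a v := by rw [hSN.S_symm a v]; exact hmS
                have hX1 := memXv a m hav'.symm hau hmS hmNv
                have hX2 := memX a b' z₁ hab' hau hav hbu hbv hz₁
                exact hfin m z₁ hX1.1 hX1.2.1 hX1.2.2.1 hX1.2.2.2
                  hX2.1 hX2.2.1 hX2.2.2.1 hX2.2.2.2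
                  (neS v a a b' m z₁ hav'.symm hab' (fun hh => hav hh.1.symm)
                    (fun hh => hbv hh.1.symm) hmS hz₁)
                  (fork' a v b' m z₁ hav' hab' (Ne.symm hbv) hmS' hz₁ (Or.inl hmNa))
              · have h2p : (R s(v, a)).length = 2 := by omega
                obtain ⟨h₁, l₁, hadj₁, hS₁, hS₂, hN₁, hN₂, hn₁, hn₂⟩ :=
                  choice_two hSN hR hav'.symm h2p
                obtain ⟨z₁, hz₁⟩ := choice_nonempty hSN hR hJbv.symm
                obtain ⟨z₂, hz₂⟩ := choice_nonempty hSN hR hab'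
                have hz₁N := trivial_strip hSN hJbv.symm ((hclean b' hbu hbv hba₀).2) z₁ hz₁
                have hz₂N := hT2 a b' hab' hau hav hbu hbv z₂ hz₂
                have hz₁S' : z₁ ∈ S b' v := by rw [hSN.S_symm b' v]; exact hz₁
                exact squareGen b' v a z₁ h₁ l₁ z₂ hJbv hav'.symm hab'
                  hz₁S' hz₁N.2 hz₁N.1 hS₁ hN₁ hn₁ hS₂ hN₂ hn₂ hadj₁ hz₂ hz₂N.1 hz₂N.2
            · refine deg3 hJ (z := a) (r := b') (s := c') hab'.ne hac'.ne ?_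
              intro y hy
              rcases hnb y hy with h | h | h | h
              · exact Or.inl h
              · exact Or.inr h
              · exact (hau' (h ▸ hy)).elim
              · exact (hav' (h ▸ hy)).elim
      -- find a path b - a - c away from u, v
      obtain ⟨c₁, hc₁u, hc₁v, hc₁w, hc₁r⟩ : ∃ c₁, c₁ ≠ u ∧ c₁ ≠ v ∧ c₁ ≠ w ∧ c₁ ≠ r := by
        by_cases hxr : x = r
        · exact ⟨c₀, hc₀u, hc₀v, hc₀w, by rw [← hxr]; exact hc₀x⟩
        · exact ⟨x, hxu, hxv, Ne.symm hwx_ne, hxr⟩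
      obtain ⟨r₁, hJc₁r₁, hr₁u, hr₁v⟩ := hstep2 c₁ hc₁u hc₁v
      obtain ⟨a, b, c, hab, hac, hbc', hau, hav, hbu, hbv, hcu, hcv⟩ :
          ∃ a b c, J.Adj a b ∧ J.Adj a c ∧ b ≠ c ∧ a ≠ u ∧ a ≠ v ∧ b ≠ u ∧ b ≠ v ∧
            c ≠ u ∧ c ≠ v := by
        by_cases hr₁w : r₁ = w
        · exact ⟨w, r, c₁, hJwr, (hr₁w ▸ hJc₁r₁).symm, Ne.symm hc₁r, hwu, hwv,
            hru, hrv, hc₁u, hc₁v⟩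
        · by_cases hr₁r : r₁ = r
          · exact ⟨r, w, c₁, hJwr.symm, (hr₁r ▸ hJc₁r₁).symm, Ne.symm hc₁w, hru, hrv,
              hwu, hwv, hc₁u, hc₁v⟩
          · exfalso
            obtain ⟨z1, hz1⟩ := choice_nonempty hSN hR hJwr
            obtain ⟨z2, hz2⟩ := choice_nonempty hSN hR hJc₁r₁
            have hX1 := memX w r z1 hJwr hwu hwv hru hrv hz1
            have hX2 := memX c₁ r₁ z2 hJc₁r₁ hc₁u hc₁v hr₁u hr₁v hz2
            exact hfin z1 z2 hX1.1 hX1.2.1 hX1.2.2.1 hX1.2.2.2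
              hX2.1 hX2.2.1 hX2.2.2.1 hX2.2.2.2
              (neS w r c₁ r₁ z1 z2 hJwr hJc₁r₁ (fun hh => hc₁w hh.1.symm)
                (fun hh => hr₁w hh.1.symm) hz1 hz2)
              (hSN.far_anti w r c₁ r₁ hJwr hJc₁r₁ (Ne.symm hc₁w) (Ne.symm hr₁w)
                (Ne.symm hc₁r) (Ne.symm hr₁r) hz1 hz2)
      by_cases hbc : J.Adj b c
      · have l1 := choice_len_one hSN hR hab (hT a b hab hau hav hbu hbv)
        have l2 := choice_len_one hSN hR hbc (hT b c hbc hbu hbv hcu hcv)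
        have l3' : (R s(c, a)).length = 1 := by
          rw [Sym2.eq_swap]
          exact choice_len_one hSN hR hac (hT a c hac hau hav hcu hcv)
        have hp3 : ((R s(a,b)).length - 1 + ((R s(b,c)).length - 1)
            + ((R s(c,a)).length - 1)) % 2 = 1 :=
          tri_parity hab hbc hac.symm (fun e => (R e).length - 1) hpar
        rw [l1, l2, l3'] at hp3
        omega
      · have hbleaf : ∀ d, J.Adj b d → d ≠ u → d ≠ v → d = a := by
          intro d hbd hdu hdv
          by_contra hda
          have hdc : d ≠ c := fun h => hbc (h ▸ hbd)
          obtain ⟨z1, hz1⟩ := choice_nonempty hSN hR hbd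
          obtain ⟨z2, hz2⟩ := choice_nonempty hSN hR hac
          have hX1 := memX b d z1 hbd hbu hbv hdu hdv hz1
          have hX2 := memX a c z2 hac hau hav hcu hcv hz2
          exact hfin z1 z2 hX1.1 hX1.2.1 hX1.2.2.1 hX1.2.2.2
            hX2.1 hX2.2.1 hX2.2.2.1 hX2.2.2.2
            (neS b d a c z1 z2 hbd hac (fun hh => hab.ne' hh.1)
              (fun hh => hbc' hh.1) hz1 hz2)
            (hSN.far_anti b d a c hbd hac hab.ne' hbc' hda hdc hz1 hz2)
        have hcleaf : ∀ d, J.Adj c d → d ≠ u → d ≠ v → d = a := by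
          intro d hcd hdu hdv
          by_contra hda
          have hdb : d ≠ b := fun h => hbc ((h ▸ hcd).symm)
          obtain ⟨z1, hz1⟩ := choice_nonempty hSN hR hcd
          obtain ⟨z2, hz2⟩ := choice_nonempty hSN hR hab
          have hX1 := memX c d z1 hcd hcu hcv hdu hdv hz1
          have hX2 := memX a b z2 hab hau hav hbu hbv hz2
          exact hfin z1 z2 hX1.1 hX1.2.1 hX1.2.2.1 hX1.2.2.2
            hX2.1 hX2.2.1 hX2.2.2.1 hX2.2.2.2
            (neS c d a b z1 z2 hcd hab (fun hh => hac.ne' hh.1)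
              (fun hh => hbc' hh.1.symm) hz1 hz2)
            (hSN.far_anti c d a b hcd hab hac.ne' (Ne.symm hbc') hda hdb hz1 hz2)
        have hJbu' : J.Adj b u := by
          by_contra hcon
          refine deg3 hJ (z := b) (r := a) (s := v) hab.ne' hbv ?_
          intro y hy
          by_cases hyu : y = u
          · exact (hcon (hyu ▸ hy)).elim
          · by_cases hyv : y = v
            · exact Or.inr hyv
            · exact Or.inl (hbleaf y hy hyu hyv)
        have hJbv' : J.Adj b v := by
          by_contra hcon
          refine deg3 hJ (z := b) (r := a) (s := u) hab.ne' hbu ?_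
          intro y hy
          by_cases hyv : y = v
          · exact (hcon (hyv ▸ hy)).elim
          · by_cases hyu : y = u
            · exact Or.inr hyu
            · exact Or.inl (hbleaf y hy hyu hyv)
        have hJcu' : J.Adj c u := by
          by_contra hcon
          refine deg3 hJ (z := c) (r := a) (s := v) hac.ne' hcv ?_
          intro y hy
          by_cases hyu : y = u
          · exact (hcon (hyu ▸ hy)).elim
          · by_cases hyv : y = v
            · exact Or.inr hyv
            · exact Or.inl (hcleaf y hy hyu hyv)
        have hJcv' : J.Adj c v := by
          by_contra hcon
          refine deg3 hJ (z := c) (r := a) (s := u) hac.ne' hcu ?_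
          intro y hy
          by_cases hyv : y = v
          · exact (hcon (hyv ▸ hy)).elim
          · by_cases hyu : y = u
            · exact Or.inr hyu
            · exact Or.inl (hcleaf y hy hyu hyv)
        by_cases hb₀ : b = a₀
        · exact main2 a c b hac hab (Ne.symm hbc') hau hav hcu hcv hbu hbv hJcu' hJcv'
            (fun h => hbc' (hb₀.trans h.symm)) (Or.inr hb₀.symm)
        · by_cases hc₀' : c = a₀
          · exact main2 a b c hab hac hbc' hau hav hbu hbv hcu hcv hJbu' hJbv' hb₀
              (Or.inr hc₀'.symm)
          · obtain ⟨q₁, hq₁⟩ := choice_nonempty hSN hR (hJbu'.symm : J.Adj u b)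
            obtain ⟨q₂, hq₂⟩ := choice_nonempty hSN hR (hJcu'.symm : J.Adj u c)
            obtain ⟨z₂, hz₂⟩ := choice_nonempty hSN hR hac
            obtain ⟨z₁, hz₁⟩ := choice_nonempty hSN hR hab
            have hq₁N := trivial_strip hSN hJbu'.symm ((hclean b hbu hbv hb₀).1) q₁ hq₁
            have hq₂N := trivial_strip hSN hJcu'.symm ((hclean c hcu hcv hc₀').1) q₂ hq₂
            have hz₂N := hT2 a c hac hau hav hcu hcv z₂ hz₂
            have hz₁N := hT2 a b hab hau hav hbu hbv z₁ hz₁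
            exact squareII u a b c q₁ q₂ z₂ z₁ hJbu'.symm hJcu'.symm hab hac
              (Ne.symm hau) hbc' hq₁ hq₁N.1 hq₁N.2 hq₂ hq₂N.1 hq₂N.2
              hz₂ hz₂N.1 hz₂N.2 hz₁ hz₁N.1 hz₁N.2
    · -- some strip away from u, v is nontrivial
      push_neg at hT
      obtain ⟨a, b, hab, hau, hav, hbu, hbv, hnsub⟩ := hT
      obtain ⟨z, hzS, hzN⟩ := Set.not_subset.mp hnsub
      obtain ⟨p, hp, h2p⟩ := nontriv_rung hSN hab hzS hzN
      by_cases h3p : 3 ≤ p.length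
      · obtain ⟨aa, bb, hnadj, hne, haS, hbS, -, -⟩ := rung_ends_nonadj hp h3p
        have hXa := memX a b aa hab hau hav hbu hbv haS
        have hXb := memX a b bb hab hau hav hbu hbv hbS
        exact hfin aa bb hXa.1 hXa.2.1 hXa.2.2.1 hXa.2.2.2
          hXb.1 hXb.2.1 hXb.2.2.1 hXb.2.2.2 hne hnadj
      · have h2 : p.length = 2 := by omega
        obtain ⟨h₁, l₁, hadj₁, hS₁, hS₂, hN₁, hN₂, hn₁, hn₂, -⟩ := rung_two hp h2
        obtain ⟨c, hcu, hcv, hca, hcb⟩ : ∃ c, c ≠ u ∧ c ≠ v ∧ c ≠ a ∧ c ≠ b := by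
          by_cases h1 : w = a ∨ w = b
          · by_cases h2' : x = a ∨ x = b
            · refine ⟨c₀, hc₀u, hc₀v, ?_, ?_⟩
              · rcases h1 with h1 | h1 <;> rcases h2' with h2' | h2'
                · exact fun h => hc₀w (h.trans h1.symm)
                · exact fun h => hc₀w (h.trans h1.symm)
                · exact fun h => hc₀x (h.trans h2'.symm)
                · exact fun _ => hwx_ne (h1.trans h2'.symm)
              · rcases h1 with h1 | h1 <;> rcases h2' with h2' | h2'
                · exact fun _ => hwx_ne (h1.trans h2'.symm)
                · exact fun h => hc₀x (h.trans h2'.symm)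
                · exact fun h => hc₀w (h.trans h1.symm)
                · exact fun h => hc₀w (h.trans h1.symm)
            · push_neg at h2'
              exact ⟨x, hxu, hxv, h2'.1, h2'.2⟩
          · push_neg at h1
            exact ⟨w, hwu, hwv, h1.1, h1.2⟩
        obtain ⟨r', hJcr', hr'u, hr'v⟩ := hstep2 c hcu hcv
        by_cases hr'a : r' = a
        · have hJac : J.Adj a c := (hr'a ▸ hJcr').symm
          obtain ⟨z', hz'⟩ := choice_nonempty hSN hR hJac
          have hX1 := memX a b l₁ hab hau hav hbu hbv hS₂
          have hX2 := memX a c z' hJac hau hav hcu hcv hz'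
          exact hfin l₁ z' hX1.1 hX1.2.1 hX1.2.2.1 hX1.2.2.2
            hX2.1 hX2.2.1 hX2.2.2.1 hX2.2.2.2
            (neS a b a c l₁ z' hab hJac (fun hh => hcb hh.2.symm)
              (fun hh => hca hh.1.symm) hS₂ hz')
            (fork' a b c l₁ z' hab hJac (fun h => hcb h.symm) hS₂ hz' (Or.inl hn₂))
        · by_cases hr'b : r' = b
          · have hJbc : J.Adj b c := (hr'b ▸ hJcr').symm
            obtain ⟨z', hz'⟩ := choice_nonempty hSN hR hJbc
            have hS₁' : h₁ ∈ S b a := by rw [hSN.S_symm b a]; exact hS₁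
            have hX1 := memX a b h₁ hab hau hav hbu hbv hS₁
            have hX2 := memX b c z' hJbc hbu hbv hcu hcv hz'
            exact hfin h₁ z' hX1.1 hX1.2.1 hX1.2.2.1 hX1.2.2.2
              hX2.1 hX2.2.1 hX2.2.2.1 hX2.2.2.2
              (neS a b b c h₁ z' hab hJbc (fun hh => hab.ne hh.1)
                (fun hh => hca hh.1.symm) hS₁ hz')
              (fork' b a c h₁ z' hab.symm hJbc (fun h => hca h.symm) hS₁' hz' (Or.inl hn₁))
          · obtain ⟨z', hz'⟩ := choice_nonempty hSN hR hJcr'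
            have hX1 := memX a b h₁ hab hau hav hbu hbv hS₁
            have hX2 := memX c r' z' hJcr' hcu hcv hr'u hr'v hz'
            exact hfin h₁ z' hX1.1 hX1.2.1 hX1.2.2.1 hX1.2.2.2
              hX2.1 hX2.2.1 hX2.2.2.1 hX2.2.2.2
              (neS a b c r' h₁ z' hab hJcr' (fun hh => hca hh.1.symm)
                (fun hh => hcb hh.2.symm) hS₁ hz')
              (hSN.far_anti a b c r' hab hJcr' (Ne.symm hca) (Ne.symm hr'a)
                (Ne.symm hcb) (Ne.symm hr'b) hS₁ hz')

end Paper
end
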